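/- Let d, l, n, s be integers with d ≥ 1, l ≥ 0, d + l ≤ n, and 1 ≤ s ≤ ⌊(n−d−l)/(d+l+1)⌋, and set m = (n+1)s + n. For A ⊆ [n] with |A| = d+l let Ã = A ∪ {n+1, n+2, …, 2n−(d+l)} ⊆ [m], and let 𝓘_{n,d+l,s+1} = { [A, f_{s+1}(Ã) ∩ [n]] : A ⊆ [n], |A| = d+l }. If l' is a positive integer and D ⊆ [n] with |D| = d + l + l' is not covered by any element of 𝓘_{n,d+l,s+1}, then no superset of D in [n] is covered by any element of 𝓘_{n,d+l,s+1}. -/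

import Mathlib

/-- The point of the circular representation of `[N] = {1, …, N}` reached from the
point `x` after `t` clockwise steps. -/
def cpt (N x t : ℕ) : ℕ := (x - 1 + t) % N + 1

/-- The block of `len` clockwise-consecutive points of the circular representation
of `[N]` starting at the point `x`. -/
def cblock (N x len : ℕ) : Finset ℕ := (Finset.range len).image (cpt N x)

/-- Data describing a candidate block structure on the circular representation of a
set `[N]`: the number `p` of blocks, the first (clockwise) element `b i` of the `i`-th
block `B i`, the length `lenB i` of `B i`, and the length `lenG i` of the gap `G i`
following `B i` clockwise (only the indices `i < p` are relevant). -/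
structure CircData where
  p : ℕ
  b : ℕ → ℕ
  lenB : ℕ → ℕ
  lenG : ℕ → ℕ

/-- The `i`-th block `B i` of the data `S` on the circular representation of `[N]`. -/
def CircData.Blk (S : CircData) (N i : ℕ) : Finset ℕ := cblock N (S.b i) (S.lenB i)

/-- The `i`-th gap `G i` of the data `S`, which follows the block `B i` clockwise. -/
def CircData.Gap (S : CircData) (N i : ℕ) : Finset ℕ :=
  cblock N (cpt N (S.b i) (S.lenB i)) (S.lenG i)

/-- `S` describes the block structure `B_1, G_1, B_2, G_2, …, B_p, G_p` of the set `A`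
with respect to the density `δ` on the circular representation of `[N]`. -/
def IsBlockStructure (N : ℕ) (A : Finset ℕ) (δ : ℝ) (S : CircData) : Prop :=
  0 < S.p ∧
  -- each block is nonempty (it contains its first element `b i`)
  (∀ i < S.p, 0 < S.lenB i) ∧
  -- the blocks and gaps are arranged consecutively clockwise, cyclically
  (∀ i, i + 1 < S.p → S.b (i + 1) = cpt N (S.b i) (S.lenB i + S.lenG i)) ∧
  S.b 0 = cpt N (S.b (S.p - 1)) (S.lenB (S.p - 1) + S.lenG (S.p - 1)) ∧
  -- the blocks and gaps form a partition of `[N]`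
  ((Finset.range S.p).biUnion (fun i => S.Blk N i ∪ S.Gap N i) = Finset.Icc 1 N) ∧
  (∀ i < S.p, ∀ j < S.p, i ≠ j →
    Disjoint (S.Blk N i ∪ S.Gap N i) (S.Blk N j ∪ S.Gap N j)) ∧
  (∀ i < S.p, Disjoint (S.Blk N i) (S.Gap N i)) ∧
  -- (i) the first (clockwise) element of each block belongs to `A`
  (∀ i < S.p, S.b i ∈ A) ∧
  -- (ii) the gaps are disjoint from `A`
  (∀ i < S.p, ∀ x ∈ S.Gap N i, x ∉ A) ∧
  -- (iii) `δ·|A ∩ B i| − 1 < |B i| ≤ δ·|A ∩ B i|`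
  (∀ i < S.p, δ * ((A ∩ S.Blk N i).card : ℝ) - 1 < ((S.Blk N i).card : ℝ) ∧
    ((S.Blk N i).card : ℝ) ≤ δ * ((A ∩ S.Blk N i).card : ℝ)) ∧
  -- (iv) every proper initial segment `[b i, y] ⊊ B i` satisfies
  -- `|[b i, y]| + 1 ≤ δ·|[b i, y] ∩ A|`
  (∀ i < S.p, ∀ t, 0 < t → t < S.lenB i →
    ((cblock N (S.b i) t).card : ℝ) + 1 ≤ δ * ((cblock N (S.b i) t ∩ A).card : ℝ))

/-- The union `𝒢_δ(A) = G_1 ∪ ⋯ ∪ G_p` of the gaps of the block structure `S`. -/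
def CircData.gapsUnion (S : CircData) (N : ℕ) : Finset ℕ :=
  (Finset.range S.p).biUnion (S.Gap N)

/-- `f_δ(A) = A ∪ 𝒢_δ(A)`, computed from the block structure `S` of `A` on `[N]`. -/
def fdelta (A : Finset ℕ) (S : CircData) (N : ℕ) : Finset ℕ := A ∪ S.gapsUnion N

namespace BSaux

open Finset

/-- clockwise distance from `a` to `z` on the circle `[1,N]`. -/
def dst (N a z : ℕ) : ℕ := (z + N - a) % N

lemma modeq_unique {a b N : ℕ} (h : a % N = b % N) (ha : a < N) (hb : b < N) : a = b := by
  rwa [Nat.mod_eq_of_lt ha, Nat.mod_eq_of_lt hb] at h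

lemma cpt_mem {N : ℕ} (hN : 1 ≤ N) (x t : ℕ) : cpt N x t ∈ Finset.Icc 1 N := by
  have := Nat.mod_lt (x - 1 + t) (show 0 < N by omega)
  simp only [cpt, Finset.mem_Icc]; omega

lemma cpt_add (N x a t : ℕ) : cpt N (cpt N x a) t = cpt N x (a + t) := by
  simp only [cpt, Nat.add_sub_cancel, Nat.mod_add_mod]
  rw [Nat.add_assoc]

lemma cpt_mod (N x t : ℕ) : cpt N x (t % N) = cpt N x t := by
  simp only [cpt, Nat.add_mod_mod]

lemma cpt_add_N (N x t : ℕ) : cpt N x (t + N) = cpt N x t := by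
  rw [← cpt_mod, Nat.add_mod_right, cpt_mod]

lemma cpt_zero {N x : ℕ} (hx : x ∈ Finset.Icc 1 N) : cpt N x 0 = x := by
  simp only [Finset.mem_Icc] at hx
  simp only [cpt, Nat.add_zero]
  rw [Nat.mod_eq_of_lt (by omega)]; omega

lemma dst_lt {N : ℕ} (hN : 1 ≤ N) (a z : ℕ) : dst N a z < N :=
  Nat.mod_lt _ (by omega)

lemma dst_self {N : ℕ} (a : ℕ) (ha : a ≤ N) : dst N a a = 0 := by
  simp only [dst]
  rw [show a + N - a = N by omega, Nat.mod_self]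

lemma dst_cpt {N : ℕ} (x : ℕ) (hx : x ∈ Finset.Icc 1 N) (t : ℕ) (ht : t < N) :
    dst N x (cpt N x t) = t := by
  simp only [Finset.mem_Icc] at hx
  have hN : 1 ≤ N := by omega
  simp only [dst, cpt]
  have h1 : (x - 1 + t) % N + 1 + N - x = (x - 1 + t) % N + (N + 1 - x) := by omega
  rw [h1, Nat.mod_add_mod]
  have : x - 1 + t + (N + 1 - x) = t + N := by omega
  rw [this, Nat.add_mod_right, Nat.mod_eq_of_lt ht]

lemma cpt_dst {N : ℕ} {a z : ℕ} (ha : a ∈ Finset.Icc 1 N) (hz : z ∈ Finset.Icc 1 N) :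
    cpt N a (dst N a z) = z := by
  simp only [Finset.mem_Icc] at ha hz
  simp only [cpt, dst]
  rw [Nat.add_mod_mod]
  have : a - 1 + (z + N - a) = z - 1 + N := by omega
  rw [this, Nat.add_mod_right, Nat.mod_eq_of_lt (by omega)]
  omega

lemma dst_eq_zero {N a z : ℕ} (ha : a ∈ Finset.Icc 1 N) (hz : z ∈ Finset.Icc 1 N)
    (h : dst N a z = 0) : z = a := by
  simp only [Finset.mem_Icc] at ha hz
  have hN : 1 ≤ N := by omega
  have h2 := cpt_dst (N := N) (a := a) (z := z) (by simp [Finset.mem_Icc]; omega)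
    (by simp [Finset.mem_Icc]; omega)
  rw [h] at h2
  rw [← h2, cpt_zero (by simp [Finset.mem_Icc]; omega)]

lemma dst_add_dst {N a x z : ℕ} (ha : a ∈ Finset.Icc 1 N) (hx : x ∈ Finset.Icc 1 N) :
    (dst N a x + dst N x z) % N = dst N a z := by
  simp only [Finset.mem_Icc] at ha hx
  simp only [dst]
  rw [Nat.mod_add_mod, Nat.add_mod_mod]
  have : x + N - a + (z + N - x) = (z + N - a) + N := by omega
  rw [this, Nat.add_mod_right]


lemma dst_sub {N a x z : ℕ} (hN : 1 ≤ N) (ha : a ∈ Finset.Icc 1 N) (hx : x ∈ Finset.Icc 1 N)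
    (h : dst N a x ≤ dst N a z) : dst N x z = dst N a z - dst N a x := by
  have h1 := dst_add_dst (N := N) (a := a) (x := x) (z := z) ha hx
  have h2 : dst N x z < N := dst_lt hN x z
  have h3 : dst N a z < N := dst_lt hN a z
  have h4 : (dst N a x + (dst N a z - dst N a x)) % N = dst N a z := by
    rw [show dst N a x + (dst N a z - dst N a x) = dst N a z by omega,
      Nat.mod_eq_of_lt h3]
  -- cancel dst a x
  have h5 : (dst N a x + dst N x z) % N = (dst N a x + (dst N a z - dst N a x)) % N := by
    rw [h1, h4]
  have h7 : dst N x z ≡ dst N a z - dst N a x [MOD N] :=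
    Nat.ModEq.add_left_cancel' (dst N a x) h5
  exact modeq_unique h7 h2 (by omega)

lemma dst_add_of {N a x z : ℕ} (ha : a ∈ Finset.Icc 1 N) (hx : x ∈ Finset.Icc 1 N)
    (h : dst N a x + dst N x z < N) : dst N a z = dst N a x + dst N x z := by
  have h1 := dst_add_dst (N := N) (a := a) (x := x) (z := z) ha hx
  rw [Nat.mod_eq_of_lt h] at h1
  omega

/-- offset of `z` from base `x0`, as used everywhere; `z = cpt N x0 (dst N x0 z)`. -/
lemma dst_shift {N x0 a z : ℕ} (hN : 1 ≤ N) (hx0 : x0 ∈ Finset.Icc 1 N)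
    (ha : a ∈ Finset.Icc 1 N) :
    dst N a z = (dst N x0 z + N - dst N x0 a) % N := by
  have h1 := dst_add_dst (N := N) (a := x0) (x := a) (z := z) hx0 ha
  have h2 : dst N a z < N := dst_lt hN a z
  have h3 : dst N x0 a < N := dst_lt hN x0 a
  have h4 : (dst N x0 a + ((dst N x0 z + N - dst N x0 a) % N)) % N = dst N x0 z := by
    rw [Nat.add_mod_mod]
    rw [show dst N x0 a + (dst N x0 z + N - dst N x0 a) = dst N x0 z + N by omega,
      Nat.add_mod_right, Nat.mod_eq_of_lt (dst_lt hN x0 z)]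
  have h5 : (dst N x0 a + dst N a z) % N = (dst N x0 a + ((dst N x0 z + N - dst N x0 a) % N)) % N := by
    rw [h1, h4]
  have h7 : dst N a z ≡ (dst N x0 z + N - dst N x0 a) % N [MOD N] :=
    Nat.ModEq.add_left_cancel' (dst N x0 a) h5
  exact modeq_unique h7 h2 (Nat.mod_lt _ (by omega))

lemma cpt_inj {N x u v : ℕ} (hu : u < N) (hv : v < N) (h : cpt N x u = cpt N x v) :
    u = v := by
  simp only [cpt] at h
  have h1 : (x - 1 + u) % N = (x - 1 + v) % N := by omega
  have h2 : u ≡ v [MOD N] := Nat.ModEq.add_left_cancel' (x - 1) h1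
  exact modeq_unique h2 hu hv

lemma cpt_eq_iff_modeq {N x u v : ℕ} (hN : 1 ≤ N) :
    cpt N x u = cpt N x v ↔ u % N = v % N := by
  constructor
  · intro h
    rw [← cpt_mod (t := u), ← cpt_mod (t := v)] at h
    exact cpt_inj (Nat.mod_lt _ (by omega)) (Nat.mod_lt _ (by omega)) h
  · intro h; rw [← cpt_mod (t := u), h, cpt_mod]

lemma cblock_eq_image_Ico (N x a len : ℕ) :
    cblock N (cpt N x a) len = (Finset.Ico a (a + len)).image (cpt N x) := by
  unfold cblock
  ext z
  simp only [Finset.mem_image, Finset.mem_range, Finset.mem_Ico]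
  constructor
  · rintro ⟨t, ht, rfl⟩
    exact ⟨a + t, by omega, (cpt_add N x a t).symm⟩
  · rintro ⟨u, hu, rfl⟩
    exact ⟨u - a, by omega, by rw [cpt_add, show a + (u - a) = u by omega]⟩

lemma mem_cblock_iff {N x len : ℕ} (hN : 1 ≤ N) (hx : x ∈ Finset.Icc 1 N)
    (hlen : len ≤ N) (z : ℕ) :
    z ∈ cblock N x len ↔ z ∈ Finset.Icc 1 N ∧ dst N x z < len := by
  unfold cblock
  simp only [Finset.mem_image, Finset.mem_range]
  constructor
  · rintro ⟨t, ht, rfl⟩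
    exact ⟨cpt_mem hN x t, by rw [dst_cpt x hx t (by omega)]; omega⟩
  · rintro ⟨hz, hd⟩
    exact ⟨dst N x z, hd, cpt_dst hx hz⟩

lemma cblock_full {N x : ℕ} (hN : 1 ≤ N) (hx : x ∈ Finset.Icc 1 N) :
    cblock N x N = Finset.Icc 1 N := by
  ext z
  rw [mem_cblock_iff hN hx le_rfl]
  exact ⟨fun h => h.1, fun h => ⟨h, dst_lt hN x z⟩⟩

lemma cblock_card_of_le {N x len : ℕ} (hlen : len ≤ N) : (cblock N x len).card = len := by
  unfold cblock
  rw [Finset.card_image_of_injOn, Finset.card_range]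
  intro u hu v hv h
  simp only [Finset.mem_coe, Finset.mem_range] at hu hv
  exact cpt_inj (by omega) (by omega) h

/-- counting function: number of offsets `u < t` (from base `x0`) whose point is in `X`. -/
def ctn (N x0 : ℕ) (X : Finset ℕ) (t : ℕ) : ℕ :=
  ((Finset.range t).filter (fun u => cpt N x0 u ∈ X)).card

lemma ctn_succ (N x0 : ℕ) (X : Finset ℕ) (t : ℕ) :
    ctn N x0 X (t + 1) = ctn N x0 X t + (if cpt N x0 t ∈ X then 1 else 0) := by
  unfold ctn
  rw [Finset.range_add_one, Finset.filter_insert]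
  split <;> simp [Finset.card_insert_of_notMem, Finset.mem_filter]

lemma ctn_mono (N x0 : ℕ) (X : Finset ℕ) {t1 t2 : ℕ} (h : t1 ≤ t2) :
    ctn N x0 X t1 ≤ ctn N x0 X t2 :=
  Finset.card_le_card (Finset.filter_subset_filter _ (by
    intro u; simp only [Finset.mem_range]; omega))

lemma ctn_le (N x0 : ℕ) (X : Finset ℕ) (t : ℕ) : ctn N x0 X t ≤ t := by
  calc ctn N x0 X t ≤ (Finset.range t).card := Finset.card_filter_le _ _
  _ = t := Finset.card_range t

lemma ctn_split (N x0 : ℕ) (X : Finset ℕ) {t1 t2 : ℕ} (h : t1 ≤ t2) :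
    ctn N x0 X t2 = ctn N x0 X t1
      + ((Finset.Ico t1 t2).filter (fun u => cpt N x0 u ∈ X)).card := by
  unfold ctn
  have hr : Finset.range t2 = Finset.range t1 ∪ Finset.Ico t1 t2 := by
    rw [Finset.range_eq_Ico, Finset.range_eq_Ico, Finset.Ico_union_Ico_eq_Ico (by omega) h]
  rw [hr, Finset.filter_union, Finset.card_union_of_disjoint]
  apply Finset.disjoint_filter_filter
  simp only [Finset.range_eq_Ico]
  exact Finset.Ico_disjoint_Ico_consecutive 0 t1 t2

lemma filter_Ico_count {N x0 : ℕ} (X : Finset ℕ) {a b : ℕ} (hb : b ≤ N) :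
    ((Finset.Ico a b).filter (fun u => cpt N x0 u ∈ X)).card
      = (X ∩ (Finset.Ico a b).image (cpt N x0)).card := by
  have : X ∩ (Finset.Ico a b).image (cpt N x0)
      = ((Finset.Ico a b).filter (fun u => cpt N x0 u ∈ X)).image (cpt N x0) := by
    ext z
    simp only [Finset.mem_inter, Finset.mem_image, Finset.mem_filter, Finset.mem_Ico]
    constructor
    · rintro ⟨hzX, u, hu, rfl⟩; exact ⟨u, ⟨hu, hzX⟩, rfl⟩
    · rintro ⟨u, ⟨hu, hzX⟩, rfl⟩; exact ⟨hzX, u, hu, rfl⟩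
  rw [this, Finset.card_image_of_injOn]
  intro u hu v hv h
  simp only [Finset.coe_filter, Set.mem_setOf_eq, Finset.mem_Ico] at hu hv
  exact cpt_inj (by omega) (by omega) h


/-- number of elements of `X` on the clockwise interval `[a,y]`. -/
def cnt (N : ℕ) (X : Finset ℕ) (a y : ℕ) : ℕ :=
  (X.filter (fun z => dst N a z ≤ dst N a y)).card

/-- `y` is covered by a clockwise interval starting in `X` of density `≥ 1/δ₀`. -/
def Blck (N δ₀ : ℕ) (X : Finset ℕ) (y : ℕ) : Prop :=
  ∃ a ∈ X, dst N a y + 1 ≤ δ₀ * cnt N X a y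

lemma dst_shift_val {N x0 a z : ℕ} (hN : 1 ≤ N) (hx0 : x0 ∈ Finset.Icc 1 N)
    (ha : a ∈ Finset.Icc 1 N) :
    dst N a z = if dst N x0 a ≤ dst N x0 z then dst N x0 z - dst N x0 a
      else dst N x0 z + N - dst N x0 a := by
  rw [dst_shift hN hx0 ha]
  have h1 : dst N x0 z < N := dst_lt hN x0 z
  have h2 : dst N x0 a < N := dst_lt hN x0 a
  split
  · rw [show dst N x0 z + N - dst N x0 a = (dst N x0 z - dst N x0 a) + N by omega,
      Nat.add_mod_right, Nat.mod_eq_of_lt (by omega)]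
  · rw [Nat.mod_eq_of_lt (by omega)]

/-- membership in the interval `[a,y]`, in offset coordinates (no wrap case). -/
lemma iv_iff_of_le {N x0 a y z : ℕ} (hN : 1 ≤ N) (hx0 : x0 ∈ Finset.Icc 1 N)
    (ha : a ∈ Finset.Icc 1 N) (hle : dst N x0 a ≤ dst N x0 y) :
    (dst N a z ≤ dst N a y) ↔
      (dst N x0 a ≤ dst N x0 z ∧ dst N x0 z ≤ dst N x0 y) := by
  have h1 : dst N x0 z < N := dst_lt hN x0 z
  have h2 : dst N x0 a < N := dst_lt hN x0 a
  have h3 : dst N x0 y < N := dst_lt hN x0 y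
  rw [dst_shift_val hN hx0 ha (z := z), dst_shift_val hN hx0 ha (z := y), if_pos hle]
  split <;> omega

/-- membership in the interval `[a,y]`, in offset coordinates (wrap case). -/
lemma iv_iff_of_gt {N x0 a y z : ℕ} (hN : 1 ≤ N) (hx0 : x0 ∈ Finset.Icc 1 N)
    (ha : a ∈ Finset.Icc 1 N) (hgt : dst N x0 y < dst N x0 a) :
    (dst N a z ≤ dst N a y) ↔
      (dst N x0 a ≤ dst N x0 z ∨ dst N x0 z ≤ dst N x0 y) := by
  have h1 : dst N x0 z < N := dst_lt hN x0 z
  have h2 : dst N x0 a < N := dst_lt hN x0 a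
  have h3 : dst N x0 y < N := dst_lt hN x0 y
  rw [dst_shift_val hN hx0 ha (z := z), dst_shift_val hN hx0 ha (z := y),
    if_neg (by omega : ¬ dst N x0 a ≤ dst N x0 y)]
  split <;> omega

/-- counting `X`-elements whose offset lies in `[α', β')`. -/
lemma card_filter_off {N x0 : ℕ} (X : Finset ℕ) (hN : 1 ≤ N) (hx0 : x0 ∈ Finset.Icc 1 N)
    (hX : X ⊆ Finset.Icc 1 N) {α' β' : ℕ} (hab : α' ≤ β') (hb : β' ≤ N) :
    (X.filter (fun z => α' ≤ dst N x0 z ∧ dst N x0 z < β')).card + ctn N x0 X α'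
      = ctn N x0 X β' := by
  have key : X.filter (fun z => α' ≤ dst N x0 z ∧ dst N x0 z < β')
      = X ∩ (Finset.Ico α' β').image (cpt N x0) := by
    ext z
    simp only [Finset.mem_filter, Finset.mem_inter, Finset.mem_image, Finset.mem_Ico]
    constructor
    · rintro ⟨hz, h1, h2⟩
      exact ⟨hz, dst N x0 z, ⟨h1, h2⟩, cpt_dst hx0 (hX hz)⟩
    · rintro ⟨hz, u, hu, rfl⟩
      rw [dst_cpt x0 hx0 u (by omega)]
      exact ⟨hz, hu⟩
  rw [key, ← filter_Ico_count X hb, ctn_split N x0 X hab]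
  omega

/-- `cnt` in offset coordinates, no-wrap case. -/
lemma cnt_eq_of_le {N x0 : ℕ} (X : Finset ℕ) (hN : 1 ≤ N) (hx0 : x0 ∈ Finset.Icc 1 N)
    (hX : X ⊆ Finset.Icc 1 N) {a y : ℕ} (ha : a ∈ Finset.Icc 1 N) (hy : y ∈ Finset.Icc 1 N)
    (hle : dst N x0 a ≤ dst N x0 y) :
    cnt N X a y + ctn N x0 X (dst N x0 a) = ctn N x0 X (dst N x0 y + 1) := by
  unfold cnt
  have key : X.filter (fun z => dst N a z ≤ dst N a y)
      = X.filter (fun z => dst N x0 a ≤ dst N x0 z ∧ dst N x0 z < dst N x0 y + 1) := by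
    ext z
    simp only [Finset.mem_filter, and_congr_right_iff]
    intro hz
    rw [iv_iff_of_le hN hx0 ha hle]
    omega
  rw [key]
  exact card_filter_off X hN hx0 hX (by omega) (by have := dst_lt hN x0 y; omega)

/-- `cnt` in offset coordinates, wrap case. -/
lemma cnt_eq_of_gt {N x0 : ℕ} (X : Finset ℕ) (hN : 1 ≤ N) (hx0 : x0 ∈ Finset.Icc 1 N)
    (hX : X ⊆ Finset.Icc 1 N) {a y : ℕ} (ha : a ∈ Finset.Icc 1 N) (hy : y ∈ Finset.Icc 1 N)
    (hgt : dst N x0 y < dst N x0 a) :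
    cnt N X a y + ctn N x0 X (dst N x0 a)
      = ctn N x0 X N + ctn N x0 X (dst N x0 y + 1) := by
  unfold cnt
  have hsplit : X.filter (fun z => dst N a z ≤ dst N a y)
      = X.filter (fun z => dst N x0 a ≤ dst N x0 z ∧ dst N x0 z < N)
        ∪ X.filter (fun z => 0 ≤ dst N x0 z ∧ dst N x0 z < dst N x0 y + 1) := by
    rw [← Finset.filter_or]
    ext z
    simp only [Finset.mem_filter, and_congr_right_iff]
    intro hz
    rw [iv_iff_of_gt hN hx0 ha hgt]
    have h1 : dst N x0 z < N := dst_lt hN x0 z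
    omega
  rw [hsplit, Finset.card_union_of_disjoint]
  · have e1 := card_filter_off X hN hx0 hX (α' := dst N x0 a) (β' := N)
      (by have := dst_lt hN x0 a; omega) le_rfl
    have e2 := card_filter_off X hN hx0 hX (α' := 0) (β' := dst N x0 y + 1)
      (by omega) (by have := dst_lt hN x0 y; omega)
    have e3 : ctn N x0 X 0 = 0 := by simp [ctn]
    omega
  · rw [Finset.disjoint_left]
    intro z h1 h2
    simp only [Finset.mem_filter] at h1 h2
    omega


lemma cblock_subset {N : ℕ} (hN : 1 ≤ N) (x len : ℕ) : cblock N x len ⊆ Finset.Icc 1 N := by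
  intro z hz
  unfold cblock at hz
  simp only [Finset.mem_image, Finset.mem_range] at hz
  obtain ⟨t, _, rfl⟩ := hz
  exact cpt_mem hN x t

lemma cblock_card_ge {N x len : ℕ} (hN : 1 ≤ N) (hx : x ∈ Finset.Icc 1 N) (hlen : N ≤ len) :
    (cblock N x len).card = N := by
  have h1 : cblock N x N ⊆ cblock N x len := by
    unfold cblock
    apply Finset.image_subset_image
    intro u hu
    simp only [Finset.mem_range] at *
    omega
  have h2 := cblock_subset hN x len
  rw [cblock_full hN hx] at h1
  have := Finset.card_le_card h1
  have := Finset.card_le_card h2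
  simp only [Nat.card_Icc] at *
  omega

def osum (S : CircData) (i : ℕ) : ℕ := ∑ u ∈ Finset.range i, (S.lenB u + S.lenG u)

def gsum (S : CircData) (i : ℕ) : ℕ := ∑ u ∈ Finset.range i, S.lenG u

lemma osum_succ (S : CircData) (i : ℕ) : osum S (i + 1) = osum S i + S.lenB i + S.lenG i := by
  unfold osum
  rw [Finset.sum_range_succ]
  ring

lemma gsum_succ (S : CircData) (i : ℕ) : gsum S (i + 1) = gsum S i + S.lenG i := by
  unfold gsum
  rw [Finset.sum_range_succ]

lemma osum_mono (S : CircData) {i j : ℕ} (h : i ≤ j) : osum S i ≤ osum S j := by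
  unfold osum
  apply Finset.sum_le_sum_of_subset
  intro u hu
  simp only [Finset.mem_range] at *
  omega

lemma gsum_mono (S : CircData) {i j : ℕ} (h : i ≤ j) : gsum S i ≤ gsum S j := by
  unfold gsum
  apply Finset.sum_le_sum_of_subset
  intro u hu
  simp only [Finset.mem_range] at *
  omega


section Struct

variable {N δ₀ : ℕ} {X : Finset ℕ} {S : CircData}

theorem struct_wrappers (hN : 1 ≤ N) (hX : X ⊆ Finset.Icc 1 N)
    (hs : IsBlockStructure N X (δ₀ : ℝ) S) (hsz : δ₀ * X.card < N) :
    (∀ y ∈ S.gapsUnion N, ¬ Blck N δ₀ X y) ∧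
    (∀ y ∈ Finset.Icc 1 N, ¬ Blck N δ₀ X y → y ∈ S.gapsUnion N) := by
  obtain ⟨hp, hlenBpos, hchain, hwrap, hpart, hdisj, hBG, hbX, hgapX, hiii, hiv⟩ := hs
  set p := S.p with hpdef
  -- block starts are honest points of the circle
  have hb_mem : ∀ i < p, S.b i ∈ Finset.Icc 1 N := fun i hi => hX (hbX i hi)
  -- block lengths are at most N
  have lenB_le : ∀ i < p, S.lenB i ≤ N := by
    intro i hi
    by_contra hcon
    have h1 := hiv i hi N hN (by omega)
    rw [cblock_full hN (hb_mem i hi)] at h1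
    rw [Finset.inter_comm, Finset.inter_eq_left.mpr hX] at h1
    have h2 : (N : ℝ) + 1 ≤ (δ₀ : ℝ) * (X.card : ℝ) := by
      calc (N:ℝ) + 1 = ((Finset.Icc 1 N).card : ℝ) + 1 := by rw [Nat.card_Icc]; norm_num
      _ ≤ _ := h1
    have h3 : N + 1 ≤ δ₀ * X.card := by exact_mod_cast h2
    omega
  have card_Blk : ∀ i < p, (S.Blk N i).card = S.lenB i :=
    fun i hi => cblock_card_of_le (lenB_le i hi)
  -- total length of blocks and gaps is N
  have hcards : ∑ i ∈ Finset.range p, ((S.Blk N i).card + (S.Gap N i).card) = N := by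
    have h1 : ((Finset.range p).biUnion (fun i => S.Blk N i ∪ S.Gap N i)).card
        = ∑ i ∈ Finset.range p, (S.Blk N i ∪ S.Gap N i).card := by
      apply Finset.card_biUnion
      intro i hi j hj hij
      exact hdisj i (Finset.mem_range.mp hi) j (Finset.mem_range.mp hj) hij
    rw [hpart] at h1
    rw [Nat.card_Icc] at h1
    have h2 : ∀ i ∈ Finset.range p, (S.Blk N i ∪ S.Gap N i).card
        = (S.Blk N i).card + (S.Gap N i).card := by
      intro i hi
      exact Finset.card_union_of_disjoint (hBG i (Finset.mem_range.mp hi))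
    rw [Finset.sum_congr rfl h2] at h1
    omega
  have card_Gap : ∀ i < p, (S.Gap N i).card = S.lenG i := by
    intro i hi
    rcases le_or_gt (S.lenG i) N with h | h
    · exact cblock_card_of_le h
    · exfalso
      have h1 : (S.Gap N i).card = N := cblock_card_ge hN (cpt_mem hN _ _) (by omega)
      have h2 : (S.Blk N i).card + (S.Gap N i).card ≤ N := by
        calc (S.Blk N i).card + (S.Gap N i).card
            ≤ ∑ j ∈ Finset.range p, ((S.Blk N j).card + (S.Gap N j).card) :=
              Finset.single_le_sum (f := fun j => (S.Blk N j).card + (S.Gap N j).card)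
                (fun _ _ => Nat.zero_le _) (Finset.mem_range.mpr hi)
        _ = N := hcards
      have h3 := card_Blk i hi
      have h4 := hlenBpos i hi
      omega
  have hsum : osum S p = N := by
    unfold osum
    rw [← hcards]
    apply Finset.sum_congr rfl
    intro i hi
    rw [card_Blk i (Finset.mem_range.mp hi), card_Gap i (Finset.mem_range.mp hi)]
  have osum_le : ∀ i, i ≤ p → osum S i ≤ N := fun i hi => hsum ▸ osum_mono S hi
  -- block starts in offset coordinates
  have hb_eq : ∀ i < p, S.b i = cpt N (S.b 0) (osum S i) := by
    intro i
    induction i with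
    | zero =>
      intro _
      rw [show osum S 0 = 0 from rfl, cpt_zero (hb_mem 0 hp)]
    | succ i ih =>
      intro hi
      have hi' : i < p := by omega
      rw [hchain i hi, ih hi', cpt_add, osum_succ]
      ring_nf
  -- blocks and gaps as images of offset intervals
  have Blk_img : ∀ i < p, S.Blk N i
      = (Finset.Ico (osum S i) (osum S i + S.lenB i)).image (cpt N (S.b 0)) := by
    intro i hi
    rw [CircData.Blk, hb_eq i hi, cblock_eq_image_Ico]
  have Gap_img : ∀ i < p, S.Gap N i
      = (Finset.Ico (osum S i + S.lenB i) (osum S (i+1))).image (cpt N (S.b 0)) := by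
    intro i hi
    rw [CircData.Gap, hb_eq i hi, cpt_add, cblock_eq_image_Ico, osum_succ]
  have osum_blk_le : ∀ i < p, osum S i + S.lenB i ≤ N := by
    intro i hi
    have := osum_le (i+1) hi
    rw [osum_succ] at this
    omega
  have mem_Blk_off : ∀ i < p, ∀ z, z ∈ S.Blk N i ↔
      (z ∈ Finset.Icc 1 N ∧ osum S i ≤ dst N (S.b 0) z
        ∧ dst N (S.b 0) z < osum S i + S.lenB i) := by
    intro i hi z
    rw [Blk_img i hi]
    simp only [Finset.mem_image, Finset.mem_Ico]
    constructor
    · rintro ⟨u, hu, rfl⟩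
      have hu2 : u < N := by have := osum_blk_le i hi; omega
      rw [dst_cpt _ (hb_mem 0 hp) u hu2]
      exact ⟨cpt_mem hN _ u, hu⟩
    · rintro ⟨hz, h1, h2⟩
      exact ⟨dst N (S.b 0) z, ⟨h1, h2⟩, cpt_dst (hb_mem 0 hp) hz⟩
  have mem_Gap_off : ∀ i < p, ∀ z, z ∈ S.Gap N i ↔
      (z ∈ Finset.Icc 1 N ∧ osum S i + S.lenB i ≤ dst N (S.b 0) z
        ∧ dst N (S.b 0) z < osum S (i+1)) := by
    intro i hi z
    rw [Gap_img i hi]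
    simp only [Finset.mem_image, Finset.mem_Ico]
    constructor
    · rintro ⟨u, hu, rfl⟩
      have hu2 : u < N := by have := osum_le (i+1) hi; omega
      rw [dst_cpt _ (hb_mem 0 hp) u hu2]
      exact ⟨cpt_mem hN _ u, hu⟩
    · rintro ⟨hz, h1, h2⟩
      exact ⟨dst N (S.b 0) z, ⟨h1, h2⟩, cpt_dst (hb_mem 0 hp) hz⟩
  -- offsets of X elements are inside block intervals
  have hXoff : ∀ u < N, cpt N (S.b 0) u ∈ X →
      ∃ i < p, osum S i ≤ u ∧ u < osum S i + S.lenB i := by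
    intro u hu hmem
    have hz : cpt N (S.b 0) u ∈ Finset.Icc 1 N := cpt_mem hN _ u
    rw [← hpart] at hz
    rw [Finset.mem_biUnion] at hz
    obtain ⟨i, hi, hzi⟩ := hz
    rw [Finset.mem_union] at hzi
    have hi' := Finset.mem_range.mp hi
    rcases hzi with hzi | hzi
    · refine ⟨i, hi', ?_⟩
      rw [mem_Blk_off i hi'] at hzi
      rw [dst_cpt _ (hb_mem 0 hp) u hu] at hzi
      exact hzi.2
    · exact absurd hmem (hgapX i hi' _ hzi)
  have gap_no_xoff : ∀ i < p, ∀ u, osum S i + S.lenB i ≤ u → u < osum S (i+1) →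
      cpt N (S.b 0) u ∉ X := by
    intro i hi u h1 h2
    apply hgapX i hi
    rw [mem_Gap_off i hi]
    have hu2 : u < N := by have := osum_le (i+1) hi; omega
    rw [dst_cpt _ (hb_mem 0 hp) u hu2]
    exact ⟨cpt_mem hN _ u, h1, h2⟩
  -- ℕ versions of the density conditions
  have hiii' : ∀ i < p,
      δ₀ * ((Finset.Ico (osum S i) (osum S i + S.lenB i)).filter
        (fun u => cpt N (S.b 0) u ∈ X)).card = S.lenB i := by
    intro i hi
    have h0 := (hiii i hi)
    have hcount : ((Finset.Ico (osum S i) (osum S i + S.lenB i)).filter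
        (fun u => cpt N (S.b 0) u ∈ X)).card = (X ∩ S.Blk N i).card := by
      rw [filter_Ico_count X (osum_blk_le i hi), Blk_img i hi]
    rw [hcount]
    have h1 : ((S.Blk N i).card : ℝ) ≤ (δ₀:ℝ) * ((X ∩ S.Blk N i).card : ℝ) := h0.2
    have h2 : (δ₀:ℝ) * ((X ∩ S.Blk N i).card : ℝ) - 1 < ((S.Blk N i).card : ℝ) := h0.1
    have h3 : (S.Blk N i).card ≤ δ₀ * (X ∩ S.Blk N i).card := by exact_mod_cast h1
    have h4 : δ₀ * (X ∩ S.Blk N i).card < (S.Blk N i).card + 1 := by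
      have : (δ₀:ℝ) * ((X ∩ S.Blk N i).card : ℝ) < ((S.Blk N i).card : ℝ) + 1 := by
        linarith
      exact_mod_cast this
    rw [card_Blk i hi] at h3 h4
    omega
  have hiv' : ∀ i < p, ∀ t, 0 < t → t < S.lenB i →
      t + 1 ≤ δ₀ * ((Finset.Ico (osum S i) (osum S i + t)).filter
        (fun u => cpt N (S.b 0) u ∈ X)).card := by
    intro i hi t ht1 ht2
    have h0 := hiv i hi t ht1 ht2
    have hble := lenB_le i hi
    have hcb : cblock N (S.b i) t = (Finset.Ico (osum S i) (osum S i + t)).image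
        (cpt N (S.b 0)) := by
      rw [hb_eq i hi, cblock_eq_image_Ico]
    have hbound : osum S i + t ≤ N := by have := osum_blk_le i hi; omega
    have hcard : (cblock N (S.b i) t).card = t := cblock_card_of_le (by omega)
    have hcount : ((Finset.Ico (osum S i) (osum S i + t)).filter
        (fun u => cpt N (S.b 0) u ∈ X)).card = (cblock N (S.b i) t ∩ X).card := by
      rw [filter_Ico_count X hbound, hcb, Finset.inter_comm]
    rw [hcount]
    rw [hcard] at h0
    have : (t : ℝ) + 1 ≤ (δ₀:ℝ) * ((cblock N (S.b i) t ∩ X).card : ℝ) := h0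
    exact_mod_cast this
  -- the prefix-sum function in offset coordinates
  set b0 := S.b 0 with hb0def
  have hb0 : b0 ∈ Finset.Icc 1 N := hb_mem 0 hp
  set Fz : ℕ → ℤ := fun t => (δ₀ : ℤ) * (ctn N b0 X t : ℤ) - t with hFzdef
  have Fz_eq : ∀ t : ℕ, Fz t = (δ₀ : ℤ) * (ctn N b0 X t : ℤ) - (t : ℤ) := fun t => rfl
  have Fz_diff : ∀ t1 t2 : ℕ, t1 ≤ t2 → Fz t2 - Fz t1
      = (δ₀ : ℤ) * (((Finset.Ico t1 t2).filter (fun u => cpt N b0 u ∈ X)).card : ℤ)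
        - ((t2 : ℤ) - t1) := by
    intro t1 t2 h
    have h1 := ctn_split N b0 X h
    have h2 : (ctn N b0 X t2 : ℤ) = (ctn N b0 X t1 : ℤ)
        + (((Finset.Ico t1 t2).filter (fun u => cpt N b0 u ∈ X)).card : ℤ) := by
      exact_mod_cast h1
    rw [Fz_eq, Fz_eq, h2]
    ring
  have blk_leg : ∀ i < p, Fz (osum S i + S.lenB i) = Fz (osum S i) := by
    intro i hi
    have hiiiZ : (δ₀:ℤ) * (((Finset.Ico (osum S i) (osum S i + S.lenB i)).filter
        (fun u => cpt N b0 u ∈ X)).card : ℤ) = (S.lenB i : ℤ) := by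
      exact_mod_cast hiii' i hi
    have e1 := Fz_diff (osum S i) (osum S i + S.lenB i) (by omega)
    rw [hiiiZ] at e1
    push_cast at e1
    omega
  have gap_count_zero : ∀ i < p, ∀ t1 t2, osum S i + S.lenB i ≤ t1 → t2 ≤ osum S (i+1) →
      ((Finset.Ico t1 t2).filter (fun u => cpt N b0 u ∈ X)).card = 0 := by
    intro i hi t1 t2 h1 h2
    rw [Finset.card_eq_zero]
    apply Finset.filter_false_of_mem
    intro u hu
    simp only [Finset.mem_Ico] at hu
    exact gap_no_xoff i hi u (by omega) (by omega)
  -- value of Fz at the segment boundaries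
  have hFo : ∀ i ≤ p, Fz (osum S i) = -(gsum S i : ℤ) := by
    intro i
    induction i with
    | zero =>
      intro _
      simp [Fz_eq, ctn, osum, gsum]
    | succ i ih =>
      intro hi
      have hi' : i < p := by omega
      have e1 := blk_leg i hi'
      have hosucc : osum S (i+1) = osum S i + S.lenB i + S.lenG i := osum_succ S i
      have e2 := Fz_diff (osum S i + S.lenB i) (osum S (i+1)) (by omega)
      rw [gap_count_zero i hi' _ _ le_rfl le_rfl] at e2
      have e3 := ih (by omega)
      have e4 : (osum S (i+1) : ℤ) = (osum S i : ℤ) + (S.lenB i : ℤ) + (S.lenG i : ℤ) := by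
        exact_mod_cast hosucc
      have e5 : (gsum S (i+1) : ℤ) = (gsum S i : ℤ) + (S.lenG i : ℤ) := by
        exact_mod_cast gsum_succ S i
      push_cast at e2
      omega
  -- Fz within a block
  have hFblock : ∀ i < p, ∀ t ≤ S.lenB i, Fz (osum S i) ≤ Fz (osum S i + t) := by
    intro i hi t ht
    rcases Nat.eq_zero_or_pos t with rfl | ht0
    · simp
    rcases eq_or_lt_of_le ht with rfl | ht2
    · have := blk_leg i hi
      omega
    · have e1 := Fz_diff (osum S i) (osum S i + t) (by omega)
      have e2 : ((t:ℤ)) + 1 ≤ (δ₀ : ℤ) * (((Finset.Ico (osum S i) (osum S i + t)).filter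
          (fun u => cpt N b0 u ∈ X)).card : ℤ) := by
        exact_mod_cast hiv' i hi t ht0 ht2
      push_cast at e1
      omega
  -- Fz within a gap
  have hFgap : ∀ i < p, ∀ t < S.lenG i,
      Fz (osum S i + S.lenB i + t + 1) = -(gsum S i : ℤ) - ((t : ℤ) + 1) := by
    intro i hi t ht
    have e1 := blk_leg i hi
    have hosucc : osum S (i+1) = osum S i + S.lenB i + S.lenG i := osum_succ S i
    have e2 := Fz_diff (osum S i + S.lenB i) (osum S i + S.lenB i + t + 1) (by omega)
    rw [gap_count_zero i hi _ _ le_rfl (by omega)] at e2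
    have e3 := hFo i (by omega)
    push_cast at e2
    omega
  have hFN : Fz N = -(gsum S p : ℤ) := by
    rw [← hsum]
    exact hFo p le_rfl
  -- S1 : points in gaps are not blocked
  have hS1 : ∀ j < p, ∀ y ∈ S.Gap N j, ∀ a ∈ X,
      (δ₀ : ℤ) * (cnt N X a y : ℤ) < (dst N a y : ℤ) + 1 := by
    intro j hj y hy a haX
    have hyI : y ∈ Finset.Icc 1 N := (mem_Gap_off j hj y |>.mp hy).1
    have haI : a ∈ Finset.Icc 1 N := hX haX
    have hβ := (mem_Gap_off j hj y |>.mp hy).2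
    have hosuccj : osum S (j+1) = osum S j + S.lenB j + S.lenG j := osum_succ S j
    have haoff : ∃ i < p, osum S i ≤ (dst N b0 a) ∧ (dst N b0 a) < osum S i + S.lenB i := by
      apply hXoff (dst N b0 a) (dst_lt hN b0 a)
      rw [cpt_dst hb0 haI]
      exact haX
    obtain ⟨i, hi, hαi⟩ := haoff
    have hFα : -(gsum S i : ℤ) ≤ Fz (dst N b0 a) := by
      have h1 := hFblock i hi ((dst N b0 a) - osum S i) (by omega)
      rw [show osum S i + ((dst N b0 a) - osum S i) = (dst N b0 a) by omega] at h1
      have h2 := hFo i (by omega)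
      omega
    have hFβ : Fz ((dst N b0 y) + 1) ≤ -(gsum S j : ℤ) - 1 := by
      have h1 := hFgap j hj ((dst N b0 y) - (osum S j + S.lenB j)) (by omega)
      rw [show osum S j + S.lenB j + ((dst N b0 y) - (osum S j + S.lenB j)) + 1 = (dst N b0 y) + 1 by omega] at h1
      have h2 : (0:ℤ) ≤ (((dst N b0 y) - (osum S j + S.lenB j) : ℕ) : ℤ) := by positivity
      omega
    rcases le_or_gt (dst N b0 a) (dst N b0 y) with hcase | hcase
    · -- no wrap
      have hcnt := cnt_eq_of_le X hN hb0 hX haI hyI hcase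
      have hdst : dst N a y = (dst N b0 y) - (dst N b0 a) := dst_sub hN hb0 haI hcase
      have hij : i ≤ j := by
        by_contra hcon
        have := osum_mono S (show j + 1 ≤ i by omega)
        omega
      have hgs := gsum_mono S hij
      have hcntZ : (cnt N X a y : ℤ) = (ctn N b0 X ((dst N b0 y)+1) : ℤ) - (ctn N b0 X (dst N b0 a) : ℤ) := by
        omega
      have e : (δ₀ : ℤ) * (cnt N X a y : ℤ)
          = Fz ((dst N b0 y) + 1) - Fz (dst N b0 a) + (((dst N b0 y) : ℤ) + 1 - (dst N b0 a)) := by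
        rw [hcntZ, Fz_eq, Fz_eq]
        push_cast
        ring
      rw [e, hdst]
      have hgsZ : (gsum S i : ℤ) ≤ (gsum S j : ℤ) := by exact_mod_cast hgs
      push_cast
      omega
    · -- wrap
      have hcnt := cnt_eq_of_gt X hN hb0 hX haI hyI hcase
      have hdst : dst N a y = (dst N b0 y) + N - (dst N b0 a) := by
        rw [dst_shift_val hN hb0 haI (z := y), if_neg (by omega)]
      have hgs1 : gsum S i ≤ gsum S p := gsum_mono S (by omega)
      have hcntZ : (cnt N X a y : ℤ) = (ctn N b0 X N : ℤ) + (ctn N b0 X ((dst N b0 y)+1) : ℤ)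
          - (ctn N b0 X (dst N b0 a) : ℤ) := by
        omega
      have e : (δ₀ : ℤ) * (cnt N X a y : ℤ)
          = Fz N + Fz ((dst N b0 y) + 1) - Fz (dst N b0 a) + (((dst N b0 y) : ℤ) + (N:ℤ) + 1 - (dst N b0 a)) := by
        rw [hcntZ, Fz_eq, Fz_eq, Fz_eq]
        push_cast
        ring
      rw [e, hFN]
      have hβlt : (dst N b0 y) < N := dst_lt hN b0 y
      have hαlt : (dst N b0 a) < N := dst_lt hN b0 a
      have hgsZ : (gsum S i : ℤ) ≤ (gsum S p : ℤ) := by exact_mod_cast hgs1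
      have hgl : (0:ℤ) ≤ (gsum S j : ℤ) := by positivity
      rw [hdst]
      push_cast
      omega
  -- S2 : points in blocks are blocked
  have hS2 : ∀ i < p, ∀ y ∈ S.Blk N i, Blck N δ₀ X y := by
    intro i hi y hy
    have hyI : y ∈ Finset.Icc 1 N := (mem_Blk_off i hi y |>.mp hy).1
    have hβ := (mem_Blk_off i hi y |>.mp hy).2
    have hbiI : S.b i ∈ Finset.Icc 1 N := hb_mem i hi
    have hα : dst N b0 (S.b i) = osum S i := by
      rw [hb_eq i hi]
      exact dst_cpt b0 hb0 (osum S i) (by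
        have := osum_blk_le i hi
        have := hlenBpos i hi
        omega)
    refine ⟨S.b i, hbX i hi, ?_⟩
    have hle : dst N b0 (S.b i) ≤ (dst N b0 y) := by omega
    have hcnt := cnt_eq_of_le X hN hb0 hX hbiI hyI hle
    rw [hα] at hcnt
    have hdst : dst N (S.b i) y = (dst N b0 y) - osum S i := by
      have h1 := dst_sub hN hb0 hbiI (show dst N b0 (S.b i) ≤ dst N b0 y from hle)
      rw [hα] at h1
      exact h1
    have hFz : Fz (osum S i) ≤ Fz ((dst N b0 y) + 1) := by
      have h1 := hFblock i hi ((dst N b0 y) + 1 - osum S i) (by omega)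
      rw [show osum S i + ((dst N b0 y) + 1 - osum S i) = (dst N b0 y) + 1 by omega] at h1
      exact h1
    have hcntZ : (cnt N X (S.b i) y : ℤ) = (ctn N b0 X ((dst N b0 y)+1) : ℤ)
        - (ctn N b0 X (osum S i) : ℤ) := by
      omega
    have e : (δ₀ : ℤ) * (cnt N X (S.b i) y : ℤ)
        = Fz ((dst N b0 y) + 1) - Fz (osum S i) + (((dst N b0 y) : ℤ) + 1 - (osum S i : ℤ)) := by
      rw [hcntZ, Fz_eq, Fz_eq]
      push_cast
      ring
    have goal : (dst N (S.b i) y : ℤ) + 1 ≤ (δ₀ : ℤ) * (cnt N X (S.b i) y : ℤ) := by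
      rw [e, hdst]
      push_cast
      omega
    exact_mod_cast goal
  -- wrap up
  constructor
  · intro y hy
    rw [CircData.gapsUnion, Finset.mem_biUnion] at hy
    obtain ⟨j, hj, hyj⟩ := hy
    intro hb
    obtain ⟨a, haX, hblck⟩ := hb
    have h1 := hS1 j (Finset.mem_range.mp hj) y hyj a haX
    have h2 : (dst N a y : ℤ) + 1 ≤ (δ₀ : ℤ) * (cnt N X a y : ℤ) := by exact_mod_cast hblck
    omega
  · intro y hyI hnb
    have hy2 : y ∈ (Finset.range p).biUnion (fun i => S.Blk N i ∪ S.Gap N i) := by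
      rw [hpart]; exact hyI
    rw [Finset.mem_biUnion] at hy2
    obtain ⟨i, hi, hyi⟩ := hy2
    rw [Finset.mem_union] at hyi
    rcases hyi with hyi | hyi
    · exact absurd (hS2 i (Finset.mem_range.mp hi) y hyi) hnb
    · rw [CircData.gapsUnion, Finset.mem_biUnion]
      exact ⟨i, hi, hyi⟩

end Struct

section Swap

/-- cardinality of `X ∩ (x,y]`. -/
def cntIoc (N : ℕ) (X : Finset ℕ) (x y : ℕ) : ℕ :=
  (X.filter (fun z => 1 ≤ dst N x z ∧ dst N x z ≤ dst N x y)).card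

lemma cnt_split_at {N : ℕ} (hN : 1 ≤ N) (X : Finset ℕ) (hX : X ⊆ Finset.Icc 1 N)
    {a x y : ℕ} (ha : a ∈ Finset.Icc 1 N) (hx : x ∈ Finset.Icc 1 N)
    (hxy : dst N a x ≤ dst N a y) :
    cnt N X a y = cnt N X a x + cntIoc N X x y
      ∧ dst N a y = dst N a x + dst N x y := by
  have hdxy : dst N x y = dst N a y - dst N a x := dst_sub hN ha hx hxy
  have hsplitlen : dst N a y = dst N a x + dst N x y := by omega
  constructor
  · unfold cnt cntIoc
    have key : X.filter (fun z => dst N a z ≤ dst N a y)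
        = X.filter (fun z => dst N a z ≤ dst N a x)
          ∪ X.filter (fun z => 1 ≤ dst N x z ∧ dst N x z ≤ dst N x y) := by
      rw [← Finset.filter_or]
      ext z
      simp only [Finset.mem_filter, and_congr_right_iff]
      intro hz
      have hzI := hX hz
      have h1 : dst N a z < N := dst_lt hN a z
      have h2 : dst N a x < N := dst_lt hN a x
      have h3 : dst N a y < N := dst_lt hN a y
      constructor
      · intro h
        rcases le_or_gt (dst N a z) (dst N a x) with h4 | h4
        · exact Or.inl h4
        · have h5 : dst N x z = dst N a z - dst N a x := dst_sub hN ha hx (by omega)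
          exact Or.inr ⟨by omega, by omega⟩
      · rintro (h | ⟨h4, h5⟩)
        · omega
        · -- dst a z = dst a x + dst x z
          have h6 : dst N a z = dst N a x + dst N x z := by
            apply dst_add_of ha hx
            omega
          omega
    rw [key, Finset.card_union_of_disjoint]
    rw [Finset.disjoint_left]
    intro z h1 h2
    simp only [Finset.mem_filter] at h1 h2
    have hzI := hX h1.1
    have h6 : dst N a z = dst N a x + dst N x z := by
      apply dst_add_of ha hx
      have := dst_lt hN a y
      omega
    omega
  · exact hsplitlen

theorem swap_lemma {N δ₀ : ℕ} (hN : 1 ≤ N) (X F : Finset ℕ) (hX : X ⊆ Finset.Icc 1 N)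
    (hF : F ⊆ Finset.Icc 1 N) (hFX : ∀ y ∈ F, y ∉ X)
    (hgap : ∀ y ∈ F, ¬ Blck N δ₀ X y) {e : ℕ} (he : e ∈ X) {x : ℕ} (hx : x ∈ F)
    (hmin : ∀ y ∈ F, dst N x e ≤ dst N y e) :
    ∀ y ∈ F, y ≠ x → ¬ Blck N δ₀ (insert x (X.erase e)) y := by
  intro y hy hyx hblck
  obtain ⟨a, haX', hble⟩ := hblck
  have hxI : x ∈ Finset.Icc 1 N := hF hx
  have hyI : y ∈ Finset.Icc 1 N := hF hy
  have heI : e ∈ Finset.Icc 1 N := hX he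
  have haI : a ∈ Finset.Icc 1 N := by
    rcases Finset.mem_insert.mp haX' with rfl | h
    · exact hxI
    · exact hX (Finset.mem_of_mem_erase h)
  have hxe : x ≠ e := fun h => hFX x hx (h ▸ he)
  -- key positional facts
  have hgap_le : ∀ z ∈ F, ∀ b ∈ X, δ₀ * cnt N X b z ≤ dst N b z := by
    intro z hz b hb
    have := hgap z hz
    rw [Blck] at this
    push_neg at this
    have := this b hb
    omega
  -- x is the last F-point before e : for every y' ∈ F \ {x}, dst x e ≤ dst x y'
  have hkey : ∀ y' ∈ F, y' ≠ x → dst N x e ≤ dst N x y' := by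
    intro y' hy' hyx'
    by_contra hcon
    push_neg at hcon
    have h1 : dst N y' e = dst N x e - dst N x y' := dst_sub hN hxI (hF hy') (by omega)
    have h2 : dst N x y' ≠ 0 := by
      intro h
      exact hyx' (dst_eq_zero hxI (hF hy') h)
    have := hmin y' hy'
    omega
  by_cases hcase : dst N a x ≤ dst N a y
  · -- x lies on [a, y]
    have hsplit := cnt_split_at hN (insert x (X.erase e)) (by
        intro z hz
        rcases Finset.mem_insert.mp hz with rfl | h
        · exact hxI
        · exact hX (Finset.mem_of_mem_erase h)) haI hxI hcase
    -- e is in (x, y]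
    have hexy : 1 ≤ dst N x e ∧ dst N x e ≤ dst N x y := by
      constructor
      · have h2 : dst N x e ≠ 0 := by
          intro h
          have := dst_eq_zero hxI heI h
          exact hxe this.symm
        omega
      · exact hkey y hy hyx
    -- the first X-element after x
    obtain ⟨bstar, hbstar, hbmin⟩ := Finset.exists_min_image X (fun b => dst N x b) ⟨e, he⟩
    have hbstarI : bstar ∈ Finset.Icc 1 N := hX hbstar
    have hbnz : 1 ≤ dst N x bstar := by
      have h2 : dst N x bstar ≠ 0 := by
        intro h
        have := dst_eq_zero hxI hbstarI h
        exact hFX x hx (this ▸ hbstar)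
      omega
    have hbley : dst N x bstar ≤ dst N x y := le_trans (hbmin e he) hexy.2
    -- cntIoc X x y = cnt X bstar y
    have hIoc_eq : cntIoc N X x y = cnt N X bstar y := by
      unfold cntIoc cnt
      congr 1
      ext z
      simp only [Finset.mem_filter, and_congr_right_iff]
      intro hz
      have hzI := hX hz
      constructor
      · rintro ⟨h1, h2⟩
        have h3 : dst N x bstar ≤ dst N x z := by
          have := hbmin z hz
          omega
        have h4 : dst N bstar z = dst N x z - dst N x bstar := dst_sub hN hxI hbstarI h3
        have h5 : dst N bstar y = dst N x y - dst N x bstar := dst_sub hN hxI hbstarI hbley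
        omega
      · intro h1
        have h5 : dst N bstar y = dst N x y - dst N x bstar := dst_sub hN hxI hbstarI hbley
        have h6 : dst N x z = dst N x bstar + dst N bstar z := by
          apply dst_add_of hxI hbstarI
          have := dst_lt hN x y
          omega
        omega
    -- density of X on [bstar, y]
    have hby := hgap_le y hy bstar hbstar
    have h5 : dst N bstar y = dst N x y - dst N x bstar := dst_sub hN hxI hbstarI hbley
    -- cntIoc of the new set
    have hIoc_new : cntIoc N (insert x (X.erase e)) x y + 1 = cntIoc N X x y := by
      unfold cntIoc
      have key : (insert x (X.erase e)).filter
            (fun z => 1 ≤ dst N x z ∧ dst N x z ≤ dst N x y)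
          = (X.filter (fun z => 1 ≤ dst N x z ∧ dst N x z ≤ dst N x y)).erase e := by
        ext z
        simp only [Finset.mem_filter, Finset.mem_erase, Finset.mem_insert]
        constructor
        · rintro ⟨hzx | ⟨hz1, hz2⟩, hc⟩
          · exfalso
            have h0 : dst N x z = 0 := by
              rw [hzx]; exact dst_self x (Finset.mem_Icc.mp hxI).2
            omega
          · exact ⟨hz1, hz2, hc⟩
        · rintro ⟨hz1, hz2, hc⟩
          exact ⟨Or.inr ⟨hz1, hz2⟩, hc⟩
      rw [key, Finset.card_erase_of_mem]
      · have hpos : 0 < (X.filter (fun z => 1 ≤ dst N x z ∧ dst N x z ≤ dst N x y)).card := by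
          rw [Finset.card_pos]
          exact ⟨e, Finset.mem_filter.mpr ⟨he, hexy⟩⟩
        omega
      · exact Finset.mem_filter.mpr ⟨he, hexy⟩
    -- cnt of the new set on [a,x]
    have hax_new : δ₀ * cnt N (insert x (X.erase e)) a x ≤ dst N a x + δ₀ := by
      by_cases hax : a = x
      · subst hax
        have : cnt N (insert a (X.erase e)) a a ≤ 1 := by
          unfold cnt
          calc ((insert a (X.erase e)).filter (fun z => dst N a z ≤ dst N a a)).card
              ≤ ({a} : Finset ℕ).card := by
                apply Finset.card_le_card
                intro z hz
                simp only [Finset.mem_filter] at hz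
                simp only [Finset.mem_singleton]
                have hzI : z ∈ Finset.Icc 1 N := by
                  rcases Finset.mem_insert.mp hz.1 with rfl | h
                  · exact hxI
                  · exact hX (Finset.mem_of_mem_erase h)
                have h0 : dst N a a = 0 := dst_self a (Finset.mem_Icc.mp hxI).2
                exact dst_eq_zero hxI hzI (by omega)
          _ = 1 := Finset.card_singleton a
        have h0 : dst N a a = 0 := dst_self a (Finset.mem_Icc.mp hxI).2
        calc δ₀ * cnt N (insert a (X.erase e)) a a ≤ δ₀ * 1 := Nat.mul_le_mul_left _ this
        _ = δ₀ := by ring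
        _ ≤ dst N a a + δ₀ := by omega
      · have haX : a ∈ X := by
          rcases Finset.mem_insert.mp haX' with h | h
          · exact absurd h hax
          · exact Finset.mem_of_mem_erase h
        have h1 : cnt N (insert x (X.erase e)) a x ≤ cnt N X a x + 1 := by
          unfold cnt
          calc ((insert x (X.erase e)).filter (fun z => dst N a z ≤ dst N a x)).card
              ≤ (insert x (X.filter (fun z => dst N a z ≤ dst N a x))).card := by
                apply Finset.card_le_card
                intro z hz
                simp only [Finset.mem_filter, Finset.mem_insert] at hz ⊢
                rcases hz.1 with rfl | h
                · exact Or.inl rfl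
                · exact Or.inr ⟨Finset.mem_of_mem_erase h, hz.2⟩
          _ ≤ (X.filter (fun z => dst N a z ≤ dst N a x)).card + 1 :=
                Finset.card_insert_le _ _
        have h2 := hgap_le x hx a haX
        have h3 : δ₀ * (cnt N X a x + 1) = δ₀ * cnt N X a x + δ₀ := by ring
        calc δ₀ * cnt N (insert x (X.erase e)) a x ≤ δ₀ * (cnt N X a x + 1) :=
              Nat.mul_le_mul_left _ h1
        _ = δ₀ * cnt N X a x + δ₀ := h3
        _ ≤ dst N a x + δ₀ := by omega
    -- put the estimates together
    have hfin : δ₀ * cntIoc N X x y + 1 ≤ dst N x y := by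
      have h5' : dst N bstar y + dst N x bstar = dst N x y := by omega
      rw [hIoc_eq]
      linarith [hby, hbnz]
    have hdistr : δ₀ * cnt N (insert x (X.erase e)) a y
        = δ₀ * cnt N (insert x (X.erase e)) a x
          + δ₀ * cntIoc N (insert x (X.erase e)) x y := by
      rw [hsplit.1]; ring
    have hmul : δ₀ * cntIoc N (insert x (X.erase e)) x y + δ₀ = δ₀ * cntIoc N X x y := by
      rw [← hIoc_new]; ring
    have hlen := hsplit.2
    linarith [hble, hdistr, hmul, hax_new, hfin, hlen]
  · -- x not on [a, y] : contradiction with y being a gap point of X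
    push_neg at hcase
    have hax : a ≠ x := by
      intro h
      subst h
      have h0 : dst N a a = 0 := dst_self a (Finset.mem_Icc.mp haI).2
      omega
    have haX : a ∈ X := by
      rcases Finset.mem_insert.mp haX' with h | h
      · exact absurd h hax
      · exact Finset.mem_of_mem_erase h
    have h1 : cnt N (insert x (X.erase e)) a y ≤ cnt N X a y := by
      unfold cnt
      apply Finset.card_le_card
      intro z hz
      simp only [Finset.mem_filter] at hz ⊢
      rcases Finset.mem_insert.mp hz.1 with rfl | h
      · exact absurd hz.2 (by omega)
      · exact ⟨Finset.mem_of_mem_erase h, hz.2⟩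
    have h2 := hgap_le y hy a haX
    have h3 : δ₀ * cnt N (insert x (X.erase e)) a y ≤ δ₀ * cnt N X a y :=
      Nat.mul_le_mul_left _ h1
    omega

end Swap

section Exists

/-- generic prefix-sum function. -/
def Fz (N δ₀ : ℕ) (base : ℕ) (X : Finset ℕ) (t : ℕ) : ℤ :=
  (δ₀ : ℤ) * (ctn N base X t : ℤ) - t

lemma Fz_zero (N δ₀ base : ℕ) (X : Finset ℕ) : Fz N δ₀ base X 0 = 0 := by
  simp [Fz, ctn]

lemma Fz_succ (N δ₀ base : ℕ) (X : Finset ℕ) (t : ℕ) :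
    Fz N δ₀ base X (t + 1)
      = Fz N δ₀ base X t + (if cpt N base t ∈ X then (δ₀ : ℤ) else 0) - 1 := by
  unfold Fz
  rw [ctn_succ]
  split <;> push_cast <;> ring

lemma Fz_diff (N δ₀ base : ℕ) (X : Finset ℕ) {t1 t2 : ℕ} (h : t1 ≤ t2) :
    Fz N δ₀ base X t2 - Fz N δ₀ base X t1
      = (δ₀ : ℤ) * (((Finset.Ico t1 t2).filter (fun u => cpt N base u ∈ X)).card : ℤ)
        - ((t2 : ℤ) - t1) := by
  have h1 := ctn_split N base X h
  have h2 : (ctn N base X t2 : ℤ) = (ctn N base X t1 : ℤ)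
      + (((Finset.Ico t1 t2).filter (fun u => cpt N base u ∈ X)).card : ℤ) := by
    exact_mod_cast h1
  unfold Fz
  rw [h2]
  ring

lemma Fz_step_ge (N δ₀ base : ℕ) (X : Finset ℕ) (t : ℕ) :
    Fz N δ₀ base X t - 1 ≤ Fz N δ₀ base X (t + 1) := by
  rw [Fz_succ]
  have : (0:ℤ) ≤ (δ₀:ℤ) := by positivity
  split <;> omega

lemma ctn_full (N δ₀ : ℕ) {base : ℕ} (X : Finset ℕ) (hN : 1 ≤ N)
    (hb : base ∈ Finset.Icc 1 N) (hX : X ⊆ Finset.Icc 1 N) :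
    ctn N base X N = X.card := by
  unfold ctn
  rw [Finset.range_eq_Ico, filter_Ico_count X le_rfl]
  have : (Finset.Ico 0 N).image (cpt N base) = Finset.Icc 1 N := by
    have h0 : cpt N base 0 = base := cpt_zero hb
    have := cblock_eq_image_Ico N base 0 N
    rw [h0] at this
    rw [show (0 : ℕ) + N = N from by omega] at this
    rw [← this, cblock_full hN hb]
  rw [this, Finset.inter_eq_left.mpr hX]

/-- the earliest global minimum of the prefix sums, used to find a gap point. -/
noncomputable def tstar (N δ₀ : ℕ) (X : Finset ℕ) : ℕ :=
  sInf {t | (1 ≤ t ∧ t ≤ N) ∧ ∀ u, 1 ≤ u → u ≤ N → Fz N δ₀ 1 X t ≤ Fz N δ₀ 1 X u}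

noncomputable def xz (N δ₀ : ℕ) (X : Finset ℕ) : ℕ := cpt N 1 (tstar N δ₀ X)

section ExistsLemmas

variable {N δ₀ : ℕ} {X : Finset ℕ}

lemma tstar_spec (hN : 1 ≤ N) :
    (1 ≤ tstar N δ₀ X ∧ tstar N δ₀ X ≤ N)
    ∧ (∀ u, 1 ≤ u → u ≤ N → Fz N δ₀ 1 X (tstar N δ₀ X) ≤ Fz N δ₀ 1 X u)
    ∧ (∀ v, 1 ≤ v → v < tstar N δ₀ X → Fz N δ₀ 1 X (tstar N δ₀ X) + 1 ≤ Fz N δ₀ 1 X v) := by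
  have hex : {t | (1 ≤ t ∧ t ≤ N) ∧ ∀ u, 1 ≤ u → u ≤ N →
      Fz N δ₀ 1 X t ≤ Fz N δ₀ 1 X u}.Nonempty := by
    obtain ⟨t0, ht0, hmin⟩ := Finset.exists_min_image (Finset.Icc 1 N) (Fz N δ₀ 1 X)
      ⟨1, Finset.mem_Icc.mpr ⟨le_rfl, hN⟩⟩
    exact ⟨t0, Finset.mem_Icc.mp ht0, fun u h1 h2 => hmin u (Finset.mem_Icc.mpr ⟨h1, h2⟩)⟩
  have h1 := Nat.sInf_mem hex
  simp only [Set.mem_setOf_eq] at h1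
  rw [tstar]
  refine ⟨h1.1, h1.2, ?_⟩
  intro v hv1 hv2
  have h2 : v ∉ {t | (1 ≤ t ∧ t ≤ N) ∧ ∀ u, 1 ≤ u → u ≤ N →
      Fz N δ₀ 1 X t ≤ Fz N δ₀ 1 X u} := Nat.notMem_of_lt_sInf hv2
  simp only [Set.mem_setOf_eq, not_and, not_forall] at h2
  rcases lt_or_ge (Fz N δ₀ 1 X (sInf {t | (1 ≤ t ∧ t ≤ N) ∧ ∀ u, 1 ≤ u → u ≤ N →
      Fz N δ₀ 1 X t ≤ Fz N δ₀ 1 X u})) (Fz N δ₀ 1 X v) with h | h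
  · omega
  · exfalso
    have h3 : ∀ u, 1 ≤ u → u ≤ N → Fz N δ₀ 1 X v ≤ Fz N δ₀ 1 X u := by
      intro u hu1 hu2
      exact le_trans h (h1.2 u hu1 hu2)
    obtain ⟨u, hu1, hu2, hu3⟩ := h2 ⟨hv1, by omega⟩
    exact absurd (h3 u hu1 hu2) hu3

/-- the fundamental "gap" property of the rotated prefix sums. -/
lemma Q_gap (hN : 1 ≤ N) (hX : X ⊆ Finset.Icc 1 N) (hsz : δ₀ * X.card + 1 ≤ N) :
    (∀ t ≤ N, Fz N δ₀ (xz N δ₀ X) X t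
        = (if tstar N δ₀ X + t ≤ N
            then Fz N δ₀ 1 X (tstar N δ₀ X + t) - Fz N δ₀ 1 X (tstar N δ₀ X)
            else Fz N δ₀ 1 X N - Fz N δ₀ 1 X (tstar N δ₀ X)
              + Fz N δ₀ 1 X (tstar N δ₀ X + t - N)))
    ∧ (∀ t < N, Fz N δ₀ (xz N δ₀ X) X N + 1 ≤ Fz N δ₀ (xz N δ₀ X) X t) := by
  obtain ⟨⟨hts1, hts2⟩, hmin, hfirst⟩ := tstar_spec (N := N) (δ₀ := δ₀) (X := X) hN
  set ts := tstar N δ₀ X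
  have h1I : (1 : ℕ) ∈ Finset.Icc 1 N := Finset.mem_Icc.mpr ⟨le_rfl, hN⟩
  have hxz : ∀ u : ℕ, cpt N (xz N δ₀ X) u = cpt N 1 (ts + u) := by
    intro u
    rw [xz, cpt_add]
  have hper : ∀ v : ℕ, cpt N 1 (v + N) = cpt N 1 v := fun v => cpt_add_N N 1 v
  have hQeq : ∀ t ≤ N, Fz N δ₀ (xz N δ₀ X) X t
      = (if ts + t ≤ N then Fz N δ₀ 1 X (ts + t) - Fz N δ₀ 1 X ts
          else Fz N δ₀ 1 X N - Fz N δ₀ 1 X ts + Fz N δ₀ 1 X (ts + t - N)) := by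
    intro t
    induction t with
    | zero =>
      intro _
      rw [if_pos (by omega)]
      simp [Fz_zero]
    | succ t ih =>
      intro ht
      have iht := ih (by omega)
      have hstep := Fz_succ N δ₀ (xz N δ₀ X) X t
      rw [hxz t] at hstep
      rcases le_or_gt (ts + t + 1) N with hc1 | hc1
      · rw [if_pos (by omega)] at iht
        rw [if_pos (by omega)]
        have hstep2 := Fz_succ N δ₀ 1 X (ts + t)
        rw [show ts + t + 1 = ts + (t+1) from by omega] at hstep2
        rw [hstep, iht, hstep2]
        ring
      · rcases le_or_gt (ts + t) N with hc2 | hc2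
        · -- boundary : ts + t = N
          have hb : ts + t = N := by omega
          rw [if_pos hc2] at iht
          rw [if_neg (by omega)]
          have hper0 : cpt N 1 (ts + t) = cpt N 1 0 := by
            rw [hb, ← cpt_mod N 1 N, ← cpt_mod N 1 0, Nat.mod_self, Nat.zero_mod]
          have hstep2 : Fz N δ₀ 1 X 1 = (if cpt N 1 0 ∈ X then (δ₀:ℤ) else 0) - 1 := by
            have h := Fz_succ N δ₀ 1 X 0
            rw [Fz_zero] at h
            simpa using h
          rw [show ts + (t+1) - N = 1 from by omega]
          rw [hstep, iht, hper0, hb, hstep2]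
          ring
        · rw [if_neg (by omega)] at iht
          rw [if_neg (by omega)]
          have hper1 : cpt N 1 (ts + t) = cpt N 1 (ts + t - N) := by
            have h := hper (ts + t - N)
            rw [show ts + t - N + N = ts + t from by omega] at h
            exact h
          have hstep2 := Fz_succ N δ₀ 1 X (ts + t - N)
          rw [show ts + t - N + 1 = ts + (t + 1) - N from by omega] at hstep2
          rw [hstep, iht, hstep2, hper1]
          ring
  refine ⟨hQeq, ?_⟩
  have hPfN : Fz N δ₀ 1 X N ≤ -1 := by
    unfold Fz
    rw [ctn_full N δ₀ X hN h1I hX]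
    have : (δ₀ : ℤ) * (X.card : ℤ) + 1 ≤ (N : ℤ) := by exact_mod_cast hsz
    omega
  have hQN : Fz N δ₀ (xz N δ₀ X) X N = Fz N δ₀ 1 X N := by
    rw [hQeq N le_rfl, if_neg (by omega)]
    rw [show ts + N - N = ts from by omega]
    ring
  intro t ht
  rw [hQN, hQeq t (by omega)]
  rcases le_or_gt (ts + t) N with hc | hc
  · rw [if_pos hc]
    have := hmin (ts + t) (by omega) (by omega)
    omega
  · rw [if_neg (by omega)]
    have hv : 1 ≤ ts + t - N ∧ ts + t - N < ts := by omega
    have := hfirst (ts + t - N) hv.1 hv.2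
    omega

end ExistsLemmas

noncomputable def nxt (N δ₀ : ℕ) (X : Finset ℕ) (t : ℕ) : ℕ :=
  sInf {u | (u < N ∧ t ≤ u ∧ cpt N (xz N δ₀ X) u ∈ X) ∨ u = N}

noncomputable def Lq (N δ₀ : ℕ) (X : Finset ℕ) (t : ℕ) : ℕ :=
  sInf {l | 1 ≤ l ∧ t + l ≤ N ∧ Fz N δ₀ (xz N δ₀ X) X (t + l) = Fz N δ₀ (xz N δ₀ X) X t}

noncomputable def qf (N δ₀ : ℕ) (X : Finset ℕ) : ℕ → ℕ
  | 0 => nxt N δ₀ X 0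
  | i + 1 => nxt N δ₀ X (qf N δ₀ X i + Lq N δ₀ X (qf N δ₀ X i))

noncomputable def pf (N δ₀ : ℕ) (X : Finset ℕ) : ℕ := sInf {i | qf N δ₀ X i = N}

lemma modeq_window {N u v w : ℕ} (h : u % N = v % N) (h1 : w ≤ u) (h2 : u < w + N)
    (h3 : w ≤ v) (h4 : v < w + N) : u = v := by
  rcases le_or_gt u v with hle | hlt
  · have hd : N ∣ v - u := (Nat.modEq_iff_dvd' hle).mp h
    have := Nat.eq_zero_of_dvd_of_lt hd
    omega
  · have hd : N ∣ u - v := (Nat.modEq_iff_dvd' (by omega)).mp h.symm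
    have := Nat.eq_zero_of_dvd_of_lt hd
    omega

section ExistsMain

variable {N δ₀ : ℕ} {X : Finset ℕ}

theorem exists_block_structure (hN : 1 ≤ N) (hδ : 1 ≤ δ₀) (hX : X ⊆ Finset.Icc 1 N)
    (hne : X.Nonempty) (hsz : δ₀ * X.card + 1 ≤ N) :
    ∃ S : CircData, IsBlockStructure N X ((δ₀ : ℕ) : ℝ) S := by
  have hx0I : xz N δ₀ X ∈ Finset.Icc 1 N := cpt_mem hN 1 _
  have hQgap := (Q_gap (δ₀ := δ₀) hN hX hsz).2
  -- nxt facts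
  have hnxt_ne : ∀ t, {u | (u < N ∧ t ≤ u ∧ cpt N (xz N δ₀ X) u ∈ X) ∨ u = N}.Nonempty :=
    fun t => ⟨N, Or.inr rfl⟩
  have hnxt_spec : ∀ t, (nxt N δ₀ X t < N ∧ t ≤ nxt N δ₀ X t
      ∧ cpt N (xz N δ₀ X) (nxt N δ₀ X t) ∈ X) ∨ nxt N δ₀ X t = N :=
    fun t => Nat.sInf_mem (hnxt_ne t)
  have hnxt_le : ∀ t, nxt N δ₀ X t ≤ N := by
    intro t
    rcases hnxt_spec t with h | h <;> omega
  have hnxt_min : ∀ t u, t ≤ u → u < nxt N δ₀ X t → cpt N (xz N δ₀ X) u ∉ X := by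
    intro t u htu hu hmem
    have h2 : u ∉ {u | (u < N ∧ t ≤ u ∧ cpt N (xz N δ₀ X) u ∈ X) ∨ u = N} :=
      Nat.notMem_of_lt_sInf hu
    simp only [Set.mem_setOf_eq] at h2
    push_neg at h2
    have := hnxt_le t
    exact (h2.1 (by omega) htu) hmem
  have hnxt_ge : ∀ t, t ≤ N → t ≤ nxt N δ₀ X t := by
    intro t ht
    rcases hnxt_spec t with h | h <;> omega
  have hnxt_eqN : ∀ t, N ≤ t → nxt N δ₀ X t = N := by
    intro t ht
    rcases hnxt_spec t with h | h <;> omega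
  -- Lq facts
  have hLq : ∀ t, t < N → cpt N (xz N δ₀ X) t ∈ X →
      (1 ≤ Lq N δ₀ X t ∧ t + Lq N δ₀ X t ≤ N
        ∧ Fz N δ₀ (xz N δ₀ X) X (t + Lq N δ₀ X t) = Fz N δ₀ (xz N δ₀ X) X t
        ∧ ∀ j, 0 < j → j < Lq N δ₀ X t → Fz N δ₀ (xz N δ₀ X) X t + 1 ≤ Fz N δ₀ (xz N δ₀ X) X (t + j)) := by
    intro t ht hxt
    -- first find some l with Q (t+l) = Q t by a discrete IVT
    have hstep : ∀ v, Fz N δ₀ (xz N δ₀ X) X v - 1 ≤ Fz N δ₀ (xz N δ₀ X) X (v + 1) := Fz_step_ge N δ₀ (xz N δ₀ X) X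
    have hS : {j | 1 ≤ j ∧ t + j ≤ N ∧ Fz N δ₀ (xz N δ₀ X) X (t + j) ≤ Fz N δ₀ (xz N δ₀ X) X t}.Nonempty := by
      refine ⟨N - t, by omega, by omega, ?_⟩
      rw [show t + (N - t) = N from by omega]
      have := hQgap t ht
      omega
    set j0 := sInf {j | 1 ≤ j ∧ t + j ≤ N ∧ Fz N δ₀ (xz N δ₀ X) X (t + j) ≤ Fz N δ₀ (xz N δ₀ X) X t}
      with hj0def
    have hj0 := Nat.sInf_mem hS
    simp only [Set.mem_setOf_eq, ← hj0def] at hj0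
    have hQ1 : Fz N δ₀ (xz N δ₀ X) X (t + 1) = Fz N δ₀ (xz N δ₀ X) X t + (δ₀ : ℤ) - 1 := by
      have := Fz_succ N δ₀ (xz N δ₀ X) X t
      rw [if_pos hxt] at this
      omega
    have hj0eq : Fz N δ₀ (xz N δ₀ X) X (t + j0) = Fz N δ₀ (xz N δ₀ X) X t := by
      rcases eq_or_lt_of_le hj0.1 with h1 | h1
      · rw [← h1] at hj0 ⊢
        have := hj0.2.2
        omega
      · -- j0 ≥ 2
        have hnm : (j0 - 1) ∉ {j | 1 ≤ j ∧ t + j ≤ N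
            ∧ Fz N δ₀ (xz N δ₀ X) X (t + j) ≤ Fz N δ₀ (xz N δ₀ X) X t} :=
          Nat.notMem_of_lt_sInf (by omega)
        simp only [Set.mem_setOf_eq] at hnm
        push_neg at hnm
        have h2 := hnm (by omega) (by omega)
        have h3 := hstep (t + (j0 - 1))
        rw [show t + (j0 - 1) + 1 = t + j0 from by omega] at h3
        have := hj0.2.2
        omega
    have hLne : {l | 1 ≤ l ∧ t + l ≤ N
        ∧ Fz N δ₀ (xz N δ₀ X) X (t + l) = Fz N δ₀ (xz N δ₀ X) X t}.Nonempty :=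
      ⟨j0, hj0.1, hj0.2.1, hj0eq⟩
    have hLmem := Nat.sInf_mem hLne
    simp only [Set.mem_setOf_eq] at hLmem
    have hLdef : Lq N δ₀ X t = sInf {l | 1 ≤ l ∧ t + l ≤ N
        ∧ Fz N δ₀ (xz N δ₀ X) X (t + l) = Fz N δ₀ (xz N δ₀ X) X t} := rfl
    rw [← hLdef] at hLmem
    refine ⟨hLmem.1, hLmem.2.1, hLmem.2.2, ?_⟩
    intro j hj1 hj2
    induction j with
    | zero => omega
    | succ j ih =>
      have hne' : Fz N δ₀ (xz N δ₀ X) X (t + (j+1)) ≠ Fz N δ₀ (xz N δ₀ X) X t := by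
        intro heq
        have : (j+1) ∉ {l | 1 ≤ l ∧ t + l ≤ N
            ∧ Fz N δ₀ (xz N δ₀ X) X (t + l) = Fz N δ₀ (xz N δ₀ X) X t} := by
          apply Nat.notMem_of_lt_sInf
          rw [← hLdef]
          omega
        simp only [Set.mem_setOf_eq] at this
        push_neg at this
        exact (this (by omega) (by omega)) heq
      rcases Nat.eq_zero_or_pos j with rfl | hj0'
      · have e0 : t + (0 + 1) = t + 1 := by omega
        rw [e0] at hne' ⊢
        omega
      · have hih := ih hj0' (by omega)
        have h3 := hstep (t + j)
        rw [show t + j + 1 = t + (j+1) from by omega] at h3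
        omega
  -- q facts
  have hq_le : ∀ i, qf N δ₀ X i ≤ N := by
    intro i
    cases i with
    | zero => exact hnxt_le 0
    | succ i => exact hnxt_le _
  have hq_x : ∀ i, qf N δ₀ X i < N → cpt N (xz N δ₀ X) (qf N δ₀ X i) ∈ X := by
    intro i hi
    cases i with
    | zero =>
      rcases hnxt_spec 0 with h | h
      · exact h.2.2
      · rw [qf] at hi ⊢; omega
    | succ i =>
      rcases hnxt_spec (qf N δ₀ X i + Lq N δ₀ X (qf N δ₀ X i)) with h | h
      · exact h.2.2
      · rw [qf] at hi ⊢
        rw [h] at hi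
        omega
  have hq_step : ∀ i, qf N δ₀ X i < N →
      qf N δ₀ X i + Lq N δ₀ X (qf N δ₀ X i) ≤ qf N δ₀ X (i+1) := by
    intro i hi
    have h1 := hLq (qf N δ₀ X i) hi (hq_x i hi)
    exact hnxt_ge _ (by omega)
  have hq_stay : ∀ i, qf N δ₀ X i = N → qf N δ₀ X (i+1) = N := by
    intro i hi
    show nxt N δ₀ X _ = N
    exact hnxt_eqN _ (by omega)
  have hqN : qf N δ₀ X N = N := by
    have key : ∀ i, qf N δ₀ X i = N ∨ i ≤ qf N δ₀ X i := by
      intro i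
      induction i with
      | zero => exact Or.inr (Nat.zero_le _)
      | succ i ih =>
        rcases eq_or_lt_of_le (hq_le i) with h | h
        · exact Or.inl (hq_stay i h)
        · have h1 := hLq (qf N δ₀ X i) h (hq_x i h)
          have h2 := hq_step i h
          rcases ih with h3 | h3
          · omega
          · right; omega
    rcases key N with h | h
    · exact h
    · have := hq_le N
      omega
  have hpne : {i | qf N δ₀ X i = N}.Nonempty := ⟨N, hqN⟩
  have hpmem : qf N δ₀ X (pf N δ₀ X) = N := Nat.sInf_mem hpne
  have hp_lt : ∀ i, i < pf N δ₀ X → qf N δ₀ X i < N := by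
    intro i hi
    have h1 : i ∉ {i | qf N δ₀ X i = N} := Nat.notMem_of_lt_sInf hi
    simp only [Set.mem_setOf_eq] at h1
    have := hq_le i
    omega
  have hp_pos : 0 < pf N δ₀ X := by
    rcases Nat.eq_zero_or_pos (pf N δ₀ X) with h | h
    · exfalso
      have h1 : qf N δ₀ X 0 = N := by rw [← h]; exact hpmem
      obtain ⟨a, ha⟩ := hne
      have hu : dst N (xz N δ₀ X) a < N := dst_lt hN (xz N δ₀ X) a
      have hmem : cpt N (xz N δ₀ X) (dst N (xz N δ₀ X) a) ∈ X := by
        rw [cpt_dst hx0I (hX ha)]; exact ha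
      have h2 : nxt N δ₀ X 0 = N := h1
      exact hnxt_min 0 (dst N (xz N δ₀ X) a) (Nat.zero_le _) (by rw [h2]; omega) hmem
    · exact h
  have hq_mono : ∀ i j, i ≤ j → qf N δ₀ X i ≤ qf N δ₀ X j := by
    have step : ∀ i, qf N δ₀ X i ≤ qf N δ₀ X (i+1) := by
      intro i
      rcases eq_or_lt_of_le (hq_le i) with h | h
      · rw [hq_stay i h]; omega
      · have h1 := hq_step i h
        omega
    intro i j hij
    induction j with
    | zero =>
      have h0 : i = 0 := by omega
      subst h0
      exact le_rfl
    | succ j ih =>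
      rcases Nat.lt_or_ge i (j+1) with h | h
      · exact le_trans (ih (by omega)) (step j)
      · have h0 : i = j + 1 := by omega
        subst h0
        exact le_rfl
  have hgap_nox : ∀ i u, qf N δ₀ X i + Lq N δ₀ X (qf N δ₀ X i) ≤ u →
      u < qf N δ₀ X (i+1) → cpt N (xz N δ₀ X) u ∉ X := by
    intro i u h1 h2
    exact hnxt_min _ u h1 h2
  have hfirst_nox : ∀ u, u < qf N δ₀ X 0 → cpt N (xz N δ₀ X) u ∉ X := by
    intro u hu
    exact hnxt_min 0 u (Nat.zero_le _) hu
  have hcover : ∀ u, qf N δ₀ X 0 ≤ u → u < N →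
      ∃ i, i < pf N δ₀ X ∧ qf N δ₀ X i ≤ u ∧ u < qf N δ₀ X (i+1) := by
    intro u h0 hu
    obtain ⟨i, hidef⟩ : ∃ i, i = Nat.findGreatest (fun i => qf N δ₀ X i ≤ u)
      (pf N δ₀ X) := ⟨_, rfl⟩
    have hile : i ≤ pf N δ₀ X := by
      rw [hidef]; exact Nat.findGreatest_le _
    have hspec : qf N δ₀ X i ≤ u := by
      rw [hidef]
      exact Nat.findGreatest_spec (P := fun i => qf N δ₀ X i ≤ u) (Nat.zero_le _) h0
    have hgreat : ∀ k, i < k → k ≤ pf N δ₀ X → ¬ qf N δ₀ X k ≤ u := by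
      intro k hk1 hk2
      rw [hidef] at hk1
      exact Nat.findGreatest_is_greatest (P := fun m => qf N δ₀ X m ≤ u) hk1 hk2
    have hip : i < pf N δ₀ X := by
      rcases eq_or_lt_of_le hile with h | h
      · exfalso
        rw [h, hpmem] at hspec
        omega
      · exact h
    refine ⟨i, hip, hspec, ?_⟩
    by_contra hcon
    push_neg at hcon
    exact hgreat (i+1) (by omega) (by omega) hcon
  -- abbreviations in comments : q = qf, L = Lq, P = pf, x1 = xz
  have hLfacts : ∀ i, i < (pf N δ₀ X) → 1 ≤ (Lq N δ₀ X) ((qf N δ₀ X) i) ∧ (qf N δ₀ X) i + (Lq N δ₀ X) ((qf N δ₀ X) i) ≤ N :=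
    fun i hi => ⟨(hLq ((qf N δ₀ X) i) (hp_lt i hi) (hq_x i (hp_lt i hi))).1,
      (hLq ((qf N δ₀ X) i) (hp_lt i hi) (hq_x i (hp_lt i hi))).2.1⟩
  have hQeqB : ∀ i, i < (pf N δ₀ X) → Fz N δ₀ (xz N δ₀ X) X ((qf N δ₀ X) i + (Lq N δ₀ X) ((qf N δ₀ X) i)) = Fz N δ₀ (xz N δ₀ X) X ((qf N δ₀ X) i) :=
    fun i hi => (hLq ((qf N δ₀ X) i) (hp_lt i hi) (hq_x i (hp_lt i hi))).2.2.1
  have hQpre : ∀ i, i < (pf N δ₀ X) → ∀ j, 0 < j → j < (Lq N δ₀ X) ((qf N δ₀ X) i) →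
      Fz N δ₀ (xz N δ₀ X) X ((qf N δ₀ X) i) + 1 ≤ Fz N δ₀ (xz N δ₀ X) X ((qf N δ₀ X) i + j) :=
    fun i hi => (hLq ((qf N δ₀ X) i) (hp_lt i hi) (hq_x i (hp_lt i hi))).2.2.2
  have hstep' : ∀ i, i < (pf N δ₀ X) → (qf N δ₀ X) i + (Lq N δ₀ X) ((qf N δ₀ X) i) ≤ (qf N δ₀ X) (i+1) :=
    fun i hi => hq_step i (hp_lt i hi)
  have hwin : ∀ i, i < (pf N δ₀ X) → (qf N δ₀ X) 0 ≤ (qf N δ₀ X) i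
      ∧ (if i+1 = (pf N δ₀ X) then N + (qf N δ₀ X) 0 else (qf N δ₀ X) (i+1)) ≤ (qf N δ₀ X) 0 + N := by
    intro i hi
    refine ⟨hq_mono 0 i (Nat.zero_le _), ?_⟩
    split
    · omega
    · have h1 : (qf N δ₀ X) (i+1) ≤ (qf N δ₀ X) (pf N δ₀ X) := hq_mono (i+1) (pf N δ₀ X) (by omega)
      rw [hpmem] at h1
      omega
  have hEle : ∀ i j, i < j → j < (pf N δ₀ X) →
      (if i+1 = (pf N δ₀ X) then N + (qf N δ₀ X) 0 else (qf N δ₀ X) (i+1)) ≤ (qf N δ₀ X) j := by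
    intro i j hij hj
    rw [if_neg (by omega)]
    exact hq_mono (i+1) j (by omega)
  have hEdef : ∀ i, i < (pf N δ₀ X) → (qf N δ₀ X) i + (Lq N δ₀ X) ((qf N δ₀ X) i)
      + (if i+1 = (pf N δ₀ X) then N + (qf N δ₀ X) 0 - ((qf N δ₀ X) i + (Lq N δ₀ X) ((qf N δ₀ X) i))
          else (qf N δ₀ X) (i+1) - ((qf N δ₀ X) i + (Lq N δ₀ X) ((qf N δ₀ X) i)))
      = (if i+1 = (pf N δ₀ X) then N + (qf N δ₀ X) 0 else (qf N δ₀ X) (i+1)) := by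
    intro i hi
    have h1 := (hLfacts i hi).2
    have h2 := hstep' i hi
    split <;> omega
  -- counting within a block prefix
  have hcount : ∀ i, i < (pf N δ₀ X) → ∀ t, 0 < t → t ≤ (Lq N δ₀ X) ((qf N δ₀ X) i) →
      (δ₀ : ℤ) * (((Finset.Ico ((qf N δ₀ X) i) ((qf N δ₀ X) i + t)).filter
          (fun u => cpt N (xz N δ₀ X) u ∈ X)).card : ℤ)
        = Fz N δ₀ (xz N δ₀ X) X ((qf N δ₀ X) i + t) - Fz N δ₀ (xz N δ₀ X) X ((qf N δ₀ X) i) + t := by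
    intro i hi t ht0 ht
    have h1 := Fz_diff N δ₀ (xz N δ₀ X) X (t1 := (qf N δ₀ X) i) (t2 := (qf N δ₀ X) i + t) (by omega)
    push_cast at h1
    omega
  have hBlkdef : ∀ i, cblock N (cpt N (xz N δ₀ X) ((qf N δ₀ X) i)) ((Lq N δ₀ X) ((qf N δ₀ X) i))
      = (Finset.Ico ((qf N δ₀ X) i) ((qf N δ₀ X) i + (Lq N δ₀ X) ((qf N δ₀ X) i))).image (cpt N (xz N δ₀ X)) :=
    fun i => cblock_eq_image_Ico N (xz N δ₀ X) ((qf N δ₀ X) i) ((Lq N δ₀ X) ((qf N δ₀ X) i))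
  have hGapdef : ∀ i : ℕ, cblock N (cpt N (cpt N (xz N δ₀ X) ((qf N δ₀ X) i)) ((Lq N δ₀ X) ((qf N δ₀ X) i))) ((if i + 1 = (pf N δ₀ X) then N + (qf N δ₀ X) 0 - ((qf N δ₀ X) i + (Lq N δ₀ X) ((qf N δ₀ X) i)) else (qf N δ₀ X) (i+1) - ((qf N δ₀ X) i + (Lq N δ₀ X) ((qf N δ₀ X) i))))
      = (Finset.Ico ((qf N δ₀ X) i + (Lq N δ₀ X) ((qf N δ₀ X) i)) ((qf N δ₀ X) i + (Lq N δ₀ X) ((qf N δ₀ X) i) + (if i + 1 = (pf N δ₀ X) then N + (qf N δ₀ X) 0 - ((qf N δ₀ X) i + (Lq N δ₀ X) ((qf N δ₀ X) i)) else (qf N δ₀ X) (i+1) - ((qf N δ₀ X) i + (Lq N δ₀ X) ((qf N δ₀ X) i))))).image (cpt N (xz N δ₀ X)) := by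
    intro i
    rw [cpt_add]
    exact cblock_eq_image_Ico N (xz N δ₀ X) ((qf N δ₀ X) i + (Lq N δ₀ X) ((qf N δ₀ X) i)) ((if i + 1 = (pf N δ₀ X) then N + (qf N δ₀ X) 0 - ((qf N δ₀ X) i + (Lq N δ₀ X) ((qf N δ₀ X) i)) else (qf N δ₀ X) (i+1) - ((qf N δ₀ X) i + (Lq N δ₀ X) ((qf N δ₀ X) i))))
  have hinj : ∀ u v : ℕ, cpt N (xz N δ₀ X) u = cpt N (xz N δ₀ X) v → u % N = v % N :=
    fun u v h => (cpt_eq_iff_modeq hN).mp h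
  refine ⟨⟨(pf N δ₀ X), fun i => cpt N (xz N δ₀ X) ((qf N δ₀ X) i), fun i => (Lq N δ₀ X) ((qf N δ₀ X) i), fun i => (if i + 1 = (pf N δ₀ X) then N + (qf N δ₀ X) 0 - ((qf N δ₀ X) i + (Lq N δ₀ X) ((qf N δ₀ X) i)) else (qf N δ₀ X) (i+1) - ((qf N δ₀ X) i + (Lq N δ₀ X) ((qf N δ₀ X) i)))⟩,
    hp_pos, ?_, ?_, ?_, ?_, ?_, ?_, ?_, ?_, ?_, ?_⟩
  · -- blocks nonempty
    intro i hi
    exact (hLfacts i hi).1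
  · -- chain
    intro i hi
    replace hi : i + 1 < pf N δ₀ X := hi
    dsimp only
    rw [cpt_add]
    have harith : (qf N δ₀ X) i + ((Lq N δ₀ X) ((qf N δ₀ X) i) + (if i + 1 = (pf N δ₀ X) then N + (qf N δ₀ X) 0 - ((qf N δ₀ X) i + (Lq N δ₀ X) ((qf N δ₀ X) i)) else (qf N δ₀ X) (i+1) - ((qf N δ₀ X) i + (Lq N δ₀ X) ((qf N δ₀ X) i)))) = (qf N δ₀ X) (i+1) := by
      rw [if_neg (by omega)]
      have := hstep' i (by omega)
      omega
    rw [harith]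
  · -- wrap
    dsimp only
    rw [cpt_add]
    have h1 := (hLfacts ((pf N δ₀ X) - 1) (by omega)).2
    have harith : (qf N δ₀ X) ((pf N δ₀ X)-1) + ((Lq N δ₀ X) ((qf N δ₀ X) ((pf N δ₀ X)-1)) + (if ((pf N δ₀ X)-1) + 1 = (pf N δ₀ X) then N + (qf N δ₀ X) 0 - ((qf N δ₀ X) ((pf N δ₀ X)-1) + (Lq N δ₀ X) ((qf N δ₀ X) ((pf N δ₀ X)-1))) else (qf N δ₀ X) (((pf N δ₀ X)-1)+1) - ((qf N δ₀ X) ((pf N δ₀ X)-1) + (Lq N δ₀ X) ((qf N δ₀ X) ((pf N δ₀ X)-1))))) = (qf N δ₀ X) 0 + N := by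
      rw [if_pos (by omega)]
      omega
    rw [harith, cpt_add_N]
  · -- partition
    dsimp only [CircData.Blk, CircData.Gap]
    apply Finset.Subset.antisymm
    · intro z hz
      simp only [Finset.mem_biUnion, Finset.mem_union] at hz
      obtain ⟨i, hi, hz | hz⟩ := hz
      · exact cblock_subset hN _ _ hz
      · exact cblock_subset hN _ _ hz
    · intro z hz
      simp only [Finset.mem_biUnion, Finset.mem_range, Finset.mem_union]
      have ht : dst N (xz N δ₀ X) z < N := dst_lt hN _ z
      have hzt : cpt N (xz N δ₀ X) (dst N (xz N δ₀ X) z) = z := cpt_dst hx0I hz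
      rcases lt_or_ge (dst N (xz N δ₀ X) z) ((qf N δ₀ X) 0) with hca | hca
      · refine ⟨(pf N δ₀ X) - 1, by omega, Or.inr ?_⟩
        rw [hGapdef, hEdef ((pf N δ₀ X)-1) (by omega), if_pos (by omega)]
        have h1 := (hLfacts ((pf N δ₀ X)-1) (by omega)).2
        refine Finset.mem_image.mpr ⟨dst N (xz N δ₀ X) z + N,
          Finset.mem_Ico.mpr ⟨by omega, by omega⟩, ?_⟩
        rw [cpt_add_N]
        exact hzt
      · obtain ⟨i, hip, h1, h2⟩ := hcover _ hca ht
        refine ⟨i, hip, ?_⟩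
        rcases lt_or_ge (dst N (xz N δ₀ X) z) ((qf N δ₀ X) i + (Lq N δ₀ X) ((qf N δ₀ X) i)) with hc2 | hc2
        · exact Or.inl (by
            rw [hBlkdef]
            exact Finset.mem_image.mpr ⟨_, Finset.mem_Ico.mpr ⟨h1, hc2⟩, hzt⟩)
        · refine Or.inr ?_
          rw [hGapdef, hEdef i hip]
          refine Finset.mem_image.mpr ⟨dst N (xz N δ₀ X) z, Finset.mem_Ico.mpr ⟨hc2, ?_⟩, hzt⟩
          split
          · omega
          · exact h2
  · -- pairwise disjoint
    intro i hi j hj hij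
    replace hi : i < pf N δ₀ X := hi
    replace hj : j < pf N δ₀ X := hj
    dsimp only [CircData.Blk, CircData.Gap]
    have hU : ∀ k, cblock N (cpt N (xz N δ₀ X) ((qf N δ₀ X) k)) ((Lq N δ₀ X) ((qf N δ₀ X) k))
        ∪ cblock N (cpt N (cpt N (xz N δ₀ X) ((qf N δ₀ X) k)) ((Lq N δ₀ X) ((qf N δ₀ X) k))) ((if k + 1 = (pf N δ₀ X) then N + (qf N δ₀ X) 0 - ((qf N δ₀ X) k + (Lq N δ₀ X) ((qf N δ₀ X) k)) else (qf N δ₀ X) (k+1) - ((qf N δ₀ X) k + (Lq N δ₀ X) ((qf N δ₀ X) k))))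
        = (Finset.Ico ((qf N δ₀ X) k) ((qf N δ₀ X) k + (Lq N δ₀ X) ((qf N δ₀ X) k) + (if k + 1 = (pf N δ₀ X) then N + (qf N δ₀ X) 0 - ((qf N δ₀ X) k + (Lq N δ₀ X) ((qf N δ₀ X) k)) else (qf N δ₀ X) (k+1) - ((qf N δ₀ X) k + (Lq N δ₀ X) ((qf N δ₀ X) k))))).image (cpt N (xz N δ₀ X)) := by
      intro k
      rw [hBlkdef, hGapdef, ← Finset.image_union,
        Finset.Ico_union_Ico_eq_Ico (by omega) (by omega)]
    rw [hU i, hU j, Finset.disjoint_left]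
    intro z hzi hzj
    obtain ⟨u, hu, rfl⟩ := Finset.mem_image.mp hzi
    obtain ⟨v, hv, hvz⟩ := Finset.mem_image.mp hzj
    rw [Finset.mem_Ico] at hu hv
    have hmod := hinj v u hvz
    have hEi := hEdef i hi
    have hEj := hEdef j hj
    have hwi := hwin i hi
    have hwj := hwin j hj
    rw [hEi] at hu
    rw [hEj] at hv
    have hboundu : (qf N δ₀ X) 0 ≤ u ∧ u < (qf N δ₀ X) 0 + N := by
      rcases eq_or_ne (i+1) (pf N δ₀ X) with he | he
      · rw [if_pos he] at hu
        rcases hwi with ⟨w1, w2⟩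
        rw [if_pos he] at w2
        omega
      · rw [if_neg he] at hu
        rcases hwi with ⟨w1, w2⟩
        rw [if_neg he] at w2
        omega
    have hboundv : (qf N δ₀ X) 0 ≤ v ∧ v < (qf N δ₀ X) 0 + N := by
      rcases eq_or_ne (j+1) (pf N δ₀ X) with he | he
      · rw [if_pos he] at hv
        rcases hwj with ⟨w1, w2⟩
        rw [if_pos he] at w2
        omega
      · rw [if_neg he] at hv
        rcases hwj with ⟨w1, w2⟩
        rw [if_neg he] at w2
        omega
    have huv : u = v := modeq_window hmod.symm hboundu.1 hboundu.2 hboundv.1 hboundv.2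
    rcases lt_or_gt_of_ne hij with hlt | hlt
    · have h9 := hEle i j hlt hj
      rw [if_neg (by omega)] at h9 hu
      omega
    · have h9 := hEle j i hlt hi
      rw [if_neg (by omega)] at h9 hv
      omega
  · -- block and gap disjoint
    intro i hi
    replace hi : i < pf N δ₀ X := hi
    dsimp only [CircData.Blk, CircData.Gap]
    rw [hBlkdef, hGapdef, Finset.disjoint_left]
    intro z hz1 hz2
    obtain ⟨u, hu, rfl⟩ := Finset.mem_image.mp hz1
    obtain ⟨v, hv, hvz⟩ := Finset.mem_image.mp hz2
    rw [Finset.mem_Ico] at hu hv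
    have hmod := hinj v u hvz
    have hEi := hEdef i hi
    have hwi := hwin i hi
    rw [hEi] at hv
    have h1 := (hLfacts i hi).2
    have hw0 : (qf N δ₀ X) 0 ≤ (qf N δ₀ X) i := hq_mono 0 i (Nat.zero_le _)
    have hboundv : v < (qf N δ₀ X) 0 + N := by
      rcases eq_or_ne (i+1) (pf N δ₀ X) with he | he
      · rw [if_pos he] at hv
        omega
      · rw [if_neg he] at hv
        rcases hwin i hi with ⟨w1, w2⟩
        rw [if_neg he] at w2
        omega
    have huv : u = v := modeq_window hmod.symm (by omega) (by omega) (by omega) hboundv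
    omega
  · -- block starts in X
    intro i hi
    exact hq_x i (hp_lt i hi)
  · -- gaps avoid X
    intro i hi z hzG
    have hz : z ∈ (Finset.Ico ((qf N δ₀ X) i + (Lq N δ₀ X) ((qf N δ₀ X) i)) ((qf N δ₀ X) i + (Lq N δ₀ X) ((qf N δ₀ X) i) + (if i + 1 = (pf N δ₀ X) then N + (qf N δ₀ X) 0 - ((qf N δ₀ X) i + (Lq N δ₀ X) ((qf N δ₀ X) i)) else (qf N δ₀ X) (i+1) - ((qf N δ₀ X) i + (Lq N δ₀ X) ((qf N δ₀ X) i))))).image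
        (cpt N (xz N δ₀ X)) := by
      rw [← hGapdef]
      exact hzG
    obtain ⟨u, hu, rfl⟩ := Finset.mem_image.mp hz
    rw [Finset.mem_Ico] at hu
    rcases lt_or_ge u N with hultN | hugeN
    · have hlt2 : u < (qf N δ₀ X) (i+1) := by
        rcases eq_or_ne (i+1) (pf N δ₀ X) with he | he
        · rw [he, hpmem]
          exact hultN
        · have h2 := hu.2
          rw [hEdef i hi, if_neg he] at h2
          exact h2
      exact hgap_nox i u hu.1 hlt2
    · have h2 := hu.2
      rw [hEdef i hi] at h2
      have he : i + 1 = (pf N δ₀ X) := by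
        by_contra hne'
        rw [if_neg hne'] at h2
        have := hq_le (i+1)
        omega
      rw [if_pos he] at h2
      have hcpt : cpt N (xz N δ₀ X) u = cpt N (xz N δ₀ X) (u - N) := by
        have h := cpt_add_N N (xz N δ₀ X) (u - N)
        rw [show u - N + N = u from by omega] at h
        exact h
      rw [hcpt]
      exact hfirst_nox (u - N) (by omega)
  · -- density (iii)
    intro i hi
    dsimp only [CircData.Blk]
    have hble := hLfacts i hi
    have hcard : (cblock N (cpt N (xz N δ₀ X) ((qf N δ₀ X) i)) ((Lq N δ₀ X) ((qf N δ₀ X) i))).card = (Lq N δ₀ X) ((qf N δ₀ X) i) :=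
      cblock_card_of_le (by omega)
    have hcnteq : (X ∩ cblock N (cpt N (xz N δ₀ X) ((qf N δ₀ X) i)) ((Lq N δ₀ X) ((qf N δ₀ X) i))).card
        = ((Finset.Ico ((qf N δ₀ X) i) ((qf N δ₀ X) i + (Lq N δ₀ X) ((qf N δ₀ X) i))).filter
            (fun u => cpt N (xz N δ₀ X) u ∈ X)).card := by
      rw [hBlkdef]
      exact (filter_Ico_count X (by omega)).symm
    have hmain : (δ₀ : ℤ) * (((Finset.Ico ((qf N δ₀ X) i) ((qf N δ₀ X) i + (Lq N δ₀ X) ((qf N δ₀ X) i))).filter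
        (fun u => cpt N (xz N δ₀ X) u ∈ X)).card : ℤ) = ((Lq N δ₀ X) ((qf N δ₀ X) i) : ℤ) := by
      have h1 := hcount i hi ((Lq N δ₀ X) ((qf N δ₀ X) i)) (by omega) le_rfl
      rw [hQeqB i hi] at h1
      omega
    rw [hcard, hcnteq]
    have hreal : ((δ₀:ℕ):ℝ) * (((Finset.Ico ((qf N δ₀ X) i) ((qf N δ₀ X) i + (Lq N δ₀ X) ((qf N δ₀ X) i))).filter
        (fun u => cpt N (xz N δ₀ X) u ∈ X)).card : ℝ) = (((Lq N δ₀ X) ((qf N δ₀ X) i) : ℕ) : ℝ) := by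
      exact_mod_cast hmain
    constructor
    · rw [hreal]
      norm_num
    · rw [hreal]
  · -- density (iv)
    intro i hi t ht0 ht
    dsimp only at ht ⊢
    have hble := hLfacts i hi
    have hcard : (cblock N (cpt N (xz N δ₀ X) ((qf N δ₀ X) i)) t).card = t :=
      cblock_card_of_le (by omega)
    have hcnteq : (cblock N (cpt N (xz N δ₀ X) ((qf N δ₀ X) i)) t ∩ X).card
        = ((Finset.Ico ((qf N δ₀ X) i) ((qf N δ₀ X) i + t)).filter (fun u => cpt N (xz N δ₀ X) u ∈ X)).card := by
      rw [Finset.inter_comm]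
      have hcb : cblock N (cpt N (xz N δ₀ X) ((qf N δ₀ X) i)) t
          = (Finset.Ico ((qf N δ₀ X) i) ((qf N δ₀ X) i + t)).image (cpt N (xz N δ₀ X)) :=
        cblock_eq_image_Ico N (xz N δ₀ X) ((qf N δ₀ X) i) t
      rw [hcb]
      exact (filter_Ico_count X (by omega)).symm
    have hmain : (t : ℤ) + 1 ≤ (δ₀ : ℤ) * (((Finset.Ico ((qf N δ₀ X) i) ((qf N δ₀ X) i + t)).filter
        (fun u => cpt N (xz N δ₀ X) u ∈ X)).card : ℤ) := by
      have h1 := hcount i hi t ht0 (by omega)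
      have h2 := hQpre i hi t ht0 ht
      omega
    rw [hcard, hcnteq]
    have hreal : (t : ℝ) + 1 ≤ ((δ₀:ℕ):ℝ) * (((Finset.Ico ((qf N δ₀ X) i) ((qf N δ₀ X) i + t)).filter
        (fun u => cpt N (xz N δ₀ X) u ∈ X)).card : ℝ) := by
      exact_mod_cast hmain
    exact hreal

end ExistsMain

end Exists

section Main

theorem descend {n k N δ₀ : ℕ} (T : Finset ℕ) (hN : 1 ≤ N) (hnN : n ≤ N)
    (hT : ∀ t ∈ T, n < t ∧ t ≤ N) (D : Finset ℕ) (hDcard : k < D.card) :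
    ∀ E : Finset ℕ, D ⊆ E → E ⊆ Finset.Icc 1 n →
      ∀ A : Finset ℕ, A ⊆ Finset.Icc 1 n → A.card = k → A ⊆ E →
        (∀ y ∈ E, y ∉ A → ¬ Blck N δ₀ (A ∪ T) y) →
        ∃ A', A' ⊆ Finset.Icc 1 n ∧ A'.card = k ∧ A' ⊆ D ∧
          (∀ y ∈ D, y ∉ A' → ¬ Blck N δ₀ (A' ∪ T) y) := by
  intro E
  induction E using Finset.strongInduction with
  | _ E ih =>
    intro hDE hEn A hA hAc hAE hinv
    by_cases hAD : A ⊆ D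
    · exact ⟨A, hA, hAc, hAD, fun y hy hyA => hinv y (hDE hy) hyA⟩
    · obtain ⟨e, heA, heD⟩ := Finset.not_subset.mp hAD
      have hFne : (E \ A).Nonempty := by
        rw [Finset.sdiff_nonempty]
        intro hEA
        have h1 : D ⊆ A := hDE.trans hEA
        have := Finset.card_le_card h1
        omega
      obtain ⟨x, hxF, hxmin⟩ := Finset.exists_min_image (E \ A) (fun y => dst N y e) hFne
      have hXsub : A ∪ T ⊆ Finset.Icc 1 N := by
        intro z hz
        rcases Finset.mem_union.mp hz with hz | hz
        · have h1 := hA hz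
          simp only [Finset.mem_Icc] at *
          omega
        · have h1 := hT z hz
          simp only [Finset.mem_Icc]
          omega
      have hFsub : E \ A ⊆ Finset.Icc 1 N := by
        intro z hz
        have h1 := hEn (Finset.mem_sdiff.mp hz).1
        simp only [Finset.mem_Icc] at *
        omega
      have hFX : ∀ y ∈ E \ A, y ∉ A ∪ T := by
        intro y hy hc
        obtain ⟨hyE, hyA⟩ := Finset.mem_sdiff.mp hy
        rcases Finset.mem_union.mp hc with hc | hc
        · exact hyA hc
        · have h1 := hT y hc
          have h2 := hEn hyE
          simp only [Finset.mem_Icc] at h2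
          omega
      have hgap : ∀ y ∈ E \ A, ¬ Blck N δ₀ (A ∪ T) y := fun y hy =>
        hinv y (Finset.mem_sdiff.mp hy).1 (Finset.mem_sdiff.mp hy).2
      have heX : e ∈ A ∪ T := Finset.mem_union_left _ heA
      have hswap := swap_lemma hN (A ∪ T) (E \ A) hXsub hFsub hFX hgap heX hxF hxmin
      have hxA : x ∉ A := (Finset.mem_sdiff.mp hxF).2
      have hxE : x ∈ E := (Finset.mem_sdiff.mp hxF).1
      have hxn : x ∈ Finset.Icc 1 n := hEn hxE
      have hxe : x ≠ e := fun h => hxA (h ▸ heA)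
      have heT : e ∉ T := by
        intro hc
        have h1 := hT e hc
        have h2 := hA heA
        simp only [Finset.mem_Icc] at h2
        omega
      have hset : insert x ((A ∪ T).erase e) = (insert x (A.erase e)) ∪ T := by
        rw [Finset.erase_union_distrib, Finset.erase_eq_of_notMem heT, Finset.insert_union]
      have heE : e ∈ E := hAE heA
      have hEsub : E.erase e ⊂ E := Finset.erase_ssubset heE
      have hA' : insert x (A.erase e) ⊆ Finset.Icc 1 n := by
        intro z hz
        rcases Finset.mem_insert.mp hz with rfl | hz
        · exact hxn
        · exact hA (Finset.mem_of_mem_erase hz)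
      have hA'c : (insert x (A.erase e)).card = k := by
        rw [Finset.card_insert_of_notMem (fun hc => hxA (Finset.mem_of_mem_erase hc)),
          Finset.card_erase_of_mem heA, hAc]
        have h1 : 0 < A.card := Finset.card_pos.mpr ⟨e, heA⟩
        omega
      have hA'E : insert x (A.erase e) ⊆ E.erase e := by
        intro z hz
        rcases Finset.mem_insert.mp hz with rfl | hz
        · exact Finset.mem_erase.mpr ⟨hxe, hxE⟩
        · obtain ⟨hz1, hz2⟩ := Finset.mem_erase.mp hz
          exact Finset.mem_erase.mpr ⟨hz1, hAE hz2⟩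
      have hDE' : D ⊆ E.erase e := fun z hz =>
        Finset.mem_erase.mpr ⟨fun h => heD (h ▸ hz), hDE hz⟩
      have hinv' : ∀ y ∈ E.erase e, y ∉ insert x (A.erase e) →
          ¬ Blck N δ₀ ((insert x (A.erase e)) ∪ T) y := by
        intro y hy hyA'
        obtain ⟨hy1, hy2⟩ := Finset.mem_erase.mp hy
        have hyA : y ∉ A := by
          intro hc
          exact hyA' (Finset.mem_insert_of_mem (Finset.mem_erase.mpr ⟨hy1, hc⟩))
        have hyx : y ≠ x := fun h => hyA' (by rw [h]; exact Finset.mem_insert_self x _)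
        rw [← hset]
        exact hswap y (Finset.mem_sdiff.mpr ⟨hy2, hyA⟩) hyx
      exact ih (E.erase e) hEsub hDE' (fun z hz => hEn (Finset.mem_of_mem_erase hz))
        _ hA' hA'c hA'E hinv'

end Main

end BSaux

/-- part of Proposition 3.3 of the paper. Let `d ≥ 1`, `l ≥ 0`,
`d + l ≤ n`, `1 ≤ s ≤ ⌊(n−d−l)/(d+l+1)⌋` and `m = (n+1)s + n`. For `A ⊆ [n]` with
`|A| = d + l`, let `Ã = A ∪ {n+1, …, 2n−(d+l)} ⊆ [m]`, and let
`𝓘_{n,d+l,s+1} = {[A, f_{s+1}(Ã) ∩ [n]] : A ⊆ [n], |A| = d+l}`. If `l' ≥ 1` and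
`D ⊆ [n]` with `|D| = d + l + l'` is not covered by any element of `𝓘_{n,d+l,s+1}`,
then no superset of `D` in `[n]` is covered by an element of `𝓘_{n,d+l,s+1}`. -/
theorem trimmed_not_covered_superset (d l n s m l' : ℕ) (hd : 1 ≤ d) (hdl : d + l ≤ n)
    (hs1 : 1 ≤ s) (hs2 : s ≤ (n - d - l) / (d + l + 1))
    (hm : m = (n + 1) * s + n) (hl' : 1 ≤ l')
    (D : Finset ℕ) (hD : D ⊆ Finset.Icc 1 n) (hDcard : D.card = d + l + l')
    (hnotcov : ∀ A : Finset ℕ, A ⊆ Finset.Icc 1 n → A.card = d + l →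
      ∀ S : CircData,
        IsBlockStructure m (A ∪ Finset.Icc (n + 1) (2 * n - (d + l))) ((s : ℝ) + 1) S →
        ¬(A ⊆ D ∧
          D ⊆ fdelta (A ∪ Finset.Icc (n + 1) (2 * n - (d + l))) S m ∩ Finset.Icc 1 n)) :
    ∀ E : Finset ℕ, D ⊆ E → E ⊆ Finset.Icc 1 n →
      ∀ A : Finset ℕ, A ⊆ Finset.Icc 1 n → A.card = d + l →
        ∀ S : CircData,
          IsBlockStructure m (A ∪ Finset.Icc (n + 1) (2 * n - (d + l))) ((s : ℝ) + 1) S →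
          ¬(A ⊆ E ∧
            E ⊆ fdelta (A ∪ Finset.Icc (n + 1) (2 * n - (d + l))) S m ∩ Finset.Icc 1 n) := by
  intro E hDE hEn A hA hAc S hS
  rintro ⟨hAE, hEf⟩
  set T := Finset.Icc (n + 1) (2 * n - (d + l)) with hTdef
  have hn1 : 1 ≤ n := by omega
  have h2n : 2 * n + 1 ≤ m := by
    have h1 : (n + 1) * 1 ≤ (n + 1) * s := Nat.mul_le_mul_left (n + 1) hs1
    omega
  have hm1 : 1 ≤ m := by omega
  have hTmem : ∀ t ∈ T, n < t ∧ t ≤ m := by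
    intro t ht
    rw [hTdef, Finset.mem_Icc] at ht
    omega
  have hcastδ : ((s : ℝ) + 1) = (((s + 1 : ℕ) : ℕ) : ℝ) := by push_cast; ring
  rw [hcastδ] at hS
  have hXsub : A ∪ T ⊆ Finset.Icc 1 m := by
    intro z hz
    rcases Finset.mem_union.mp hz with hz | hz
    · have h1 := hA hz
      simp only [Finset.mem_Icc] at *
      omega
    · have h1 := hTmem z hz
      simp only [Finset.mem_Icc]
      omega
  have hTcard : T.card = n - (d + l) := by
    rw [hTdef, Nat.card_Icc]
    omega
  have hdisjAT : Disjoint A T := by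
    rw [Finset.disjoint_left]
    intro a haA haT
    have h1 := hA haA
    have h2 := hTmem a haT
    simp only [Finset.mem_Icc] at h1
    omega
  have hXcard : (A ∪ T).card = n := by
    rw [Finset.card_union_of_disjoint hdisjAT, hAc, hTcard]
    omega
  have hsz : (s + 1) * (A ∪ T).card + 1 ≤ m := by
    rw [hXcard]
    have h1 : (s + 1) * n = s * n + n := by ring
    have h2 : (n + 1) * s = n * s + s := by ring
    have h3 : s * n = n * s := Nat.mul_comm s n
    omega
  have hwr := BSaux.struct_wrappers hm1 hXsub hS (by omega)
  have hinv : ∀ y ∈ E, y ∉ A → ¬ BSaux.Blck m (s + 1) (A ∪ T) y := by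
    intro y hyE hyA
    have h1 := hEf hyE
    rw [Finset.mem_inter] at h1
    obtain ⟨hyf, hyn⟩ := h1
    rw [fdelta, Finset.mem_union] at hyf
    rcases hyf with hyf | hyf
    · exfalso
      rcases Finset.mem_union.mp hyf with hc | hc
      · exact hyA hc
      · have h2 := hTmem y hc
        simp only [Finset.mem_Icc] at hyn
        omega
    · exact hwr.1 y hyf
  have hDlt : d + l < D.card := by omega
  obtain ⟨A', hA'n, hA'c, hA'D, hA'gap⟩ := BSaux.descend T hm1 (by omega) hTmem D hDlt
    E hDE hEn A hA hAc hAE hinv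
  -- a block structure for the new set
  have hX'sub : A' ∪ T ⊆ Finset.Icc 1 m := by
    intro z hz
    rcases Finset.mem_union.mp hz with hz | hz
    · have h1 := hA'n hz
      simp only [Finset.mem_Icc] at *
      omega
    · have h1 := hTmem z hz
      simp only [Finset.mem_Icc]
      omega
  have hdisjA'T : Disjoint A' T := by
    rw [Finset.disjoint_left]
    intro a haA haT
    have h1 := hA'n haA
    have h2 := hTmem a haT
    simp only [Finset.mem_Icc] at h1
    omega
  have hX'card : (A' ∪ T).card = n := by
    rw [Finset.card_union_of_disjoint hdisjA'T, hA'c, hTcard]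
    omega
  have hX'ne : (A' ∪ T).Nonempty := by
    rw [← Finset.card_pos, hX'card]
    omega
  have hsz' : (s + 1) * (A' ∪ T).card + 1 ≤ m := by
    rw [hX'card]
    rw [hXcard] at hsz
    exact hsz
  obtain ⟨S', hS'⟩ := BSaux.exists_block_structure hm1 (by omega) hX'sub hX'ne hsz'
  have hwr' := BSaux.struct_wrappers hm1 hX'sub hS' (by omega)
  refine hnotcov A' (hA'D.trans hD) hA'c S' (by rw [hcastδ]; exact hS') ⟨hA'D, ?_⟩
  intro y hyD
  rw [Finset.mem_inter]
  refine ⟨?_, hD hyD⟩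
  rw [fdelta, Finset.mem_union]
  by_cases hyA' : y ∈ A'
  · exact Or.inl (Finset.mem_union_left _ hyA')
  · right
    apply hwr'.2 y
    · have h1 := hD hyD
      simp only [Finset.mem_Icc] at *
      omega
    · exact hA'gap y hyD hyA'
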